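/- arXiv:1502.05204 — 10 statements merged into one kernel-verified Lean document; each statement's English description precedes it below -/
import Mathlib

section
/- Let A and B be finite sets, let 0 < α ≤ 1, and let G ⊆ A×B be a bipartite graph with |G| ≥ α|A||B|. Then there exist subsets A' ⊆ A and B' ⊆ B such that (i) for every a' ∈ A' and b' ∈ B', the number of length-3 paths from a' to b' in G is at least α⁵|A||B|/2¹⁷, and (ii) |G ∩ (A'×B')| ≥ α|A'||B|/4 ≥ α²|A||B|/32. -/
open Finset

private lemma double_count {X Y : Type*} (s : Finset X) (t : Finset Y) (P : X → Y → Prop)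
    [∀ a b, Decidable (P a b)] :
    ∑ b ∈ t, (s.filter (fun a => P a b)).card = ∑ a ∈ s, (t.filter (fun b => P a b)).card := by
  simp_rw [Finset.card_filter]
  exact Finset.sum_comm

private lemma card_filter_product {X Y : Type*} (s : Finset X) (t : Finset Y)
    (P : X → Y → Prop) [∀ a b, Decidable (P a b)] :
    ((s ×ˢ t).filter (fun q => P q.1 q.2)).card
      = ∑ a ∈ s, (t.filter (fun b => P a b)).card := by
  simp_rw [Finset.card_filter, Finset.sum_product]

set_option maxHeartbeats 4000000 in
/-- **Graph Lemma** (Balog–Szemerédi–Gowers, graph version).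
Given a bipartite graph `G ⊆ A × B` with `|G| ≥ α|A||B|`, there exist
`A' ⊆ A` and `B' ⊆ B` such that every pair `(a', b') ∈ A' × B'` is connected
by at least `α⁵|A||B|/2¹⁷` length-3 paths, and
`|G ∩ (A'×B')| ≥ α|A'||B|/4 ≥ α²|A||B|/32`. -/
theorem stmt_0 {X Y : Type*} [DecidableEq X] [DecidableEq Y]
    (A : Finset X) (B : Finset Y) (α : ℝ) (hα0 : 0 < α) (hα1 : α ≤ 1)
    (G : Finset (X × Y)) (hG : G ⊆ A ×ˢ B)
    (hGcard : α * (A.card : ℝ) * (B.card : ℝ) ≤ (G.card : ℝ)) :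
    ∃ A' ⊆ A, ∃ B' ⊆ B,
      (∀ a' ∈ A', ∀ b' ∈ B',
        α ^ 5 * (A.card : ℝ) * (B.card : ℝ) / 2 ^ 17 ≤
          ((((A ×ˢ B).filter fun p => (a', p.2) ∈ G ∧ p ∈ G ∧ (p.1, b') ∈ G)).card : ℝ)) ∧
      α * (A'.card : ℝ) * (B.card : ℝ) / 4 ≤ ((G ∩ (A' ×ˢ B')).card : ℝ) ∧
      α ^ 2 * (A.card : ℝ) * (B.card : ℝ) / 32 ≤ α * (A'.card : ℝ) * (B.card : ℝ) / 4 := by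
  classical
  by_cases htriv : A.card = 0 ∨ B.card = 0
  · refine ⟨∅, empty_subset _, ∅, empty_subset _, ?_, ?_, ?_⟩
    · intro a' ha'; simp at ha'
    · simp
    · rcases htriv with h | h <;> simp [h]
  push_neg at htriv
  obtain ⟨hA0', hB0'⟩ := htriv
  obtain ⟨n, hn_def⟩ : ∃ x : ℝ, x = (A.card : ℝ) := ⟨_, rfl⟩
  obtain ⟨m, hm_def⟩ : ∃ x : ℝ, x = (B.card : ℝ) := ⟨_, rfl⟩
  rw [← hn_def, ← hm_def] at hGcard ⊢
  have hn : (0:ℝ) < n := by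
    simp only [hn_def]; exact_mod_cast Nat.pos_of_ne_zero hA0'
  have hm : (0:ℝ) < m := by
    simp only [hm_def]; exact_mod_cast Nat.pos_of_ne_zero hB0'
  obtain ⟨Na, hNa_def⟩ : ∃ f : X → Finset Y, f = fun a => B.filter (fun b => (a, b) ∈ G) := ⟨_, rfl⟩
  obtain ⟨A₀, hA₀_def⟩ : ∃ s : Finset X, s = A.filter (fun a => α * m / 2 ≤ ((Na a).card : ℝ)) := ⟨_, rfl⟩
  -- total edge count
  have hGsum : G.card = ∑ a ∈ A, (Na a).card := by
    have hGeq : G = (A ×ˢ B).filter (fun q => (q.1, q.2) ∈ G) := by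
      ext p
      simp only [mem_filter]
      exact ⟨fun h => ⟨hG h, h⟩, fun h => h.2⟩
    rw [hGeq, card_filter_product A B (fun a b => (a, b) ∈ G)]
    simp only [hNa_def]
  have hEdges : α * n * m ≤ ∑ a ∈ A, ((Na a).card : ℝ) := by
    have : (G.card : ℝ) = ∑ a ∈ A, ((Na a).card : ℝ) := by rw [hGsum]; push_cast; ring
    linarith [hGcard, this ▸ hGcard]
  -- restrict to high-degree vertices
  have hA₀sum : α * n * m / 2 ≤ ∑ a ∈ A₀, ((Na a).card : ℝ) := by
    have hsplit := Finset.sum_filter_add_sum_filter_not A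
      (fun a => α * m / 2 ≤ ((Na a).card : ℝ)) (fun a => ((Na a).card : ℝ))
    have hlow : ∑ a ∈ A.filter (fun a => ¬ (α * m / 2 ≤ ((Na a).card : ℝ))),
        ((Na a).card : ℝ) ≤ n * (α * m / 2) := by
      calc ∑ a ∈ A.filter (fun a => ¬ (α * m / 2 ≤ ((Na a).card : ℝ))), ((Na a).card : ℝ)
          ≤ ∑ _a ∈ A.filter (fun a => ¬ (α * m / 2 ≤ ((Na a).card : ℝ))), (α * m / 2) := by
            apply Finset.sum_le_sum
            intro a ha
            exact le_of_not_ge (mem_filter.1 ha).2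
        _ = ((A.filter (fun a => ¬ (α * m / 2 ≤ ((Na a).card : ℝ)))).card : ℝ) * (α * m / 2) := by
            rw [Finset.sum_const, nsmul_eq_mul]
        _ ≤ n * (α * m / 2) := by
            have h1 : ((A.filter (fun a => ¬ (α * m / 2 ≤ ((Na a).card : ℝ)))).card : ℝ) ≤ n := by
              simp only [hn_def]
              exact_mod_cast Finset.card_le_card (filter_subset _ _)
            have h2 : (0:ℝ) ≤ α * m / 2 := by positivity
            exact mul_le_mul_of_nonneg_right h1 h2
    have : ∑ a ∈ A₀, ((Na a).card : ℝ)
        = ∑ a ∈ A, ((Na a).card : ℝ)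
          - ∑ a ∈ A.filter (fun a => ¬ (α * m / 2 ≤ ((Na a).card : ℝ))), ((Na a).card : ℝ) := by
      rw [hA₀_def, ← hsplit]; ring
    rw [this]
    nlinarith [hEdges, hlow]
  obtain ⟨Tb, hTb_def⟩ : ∃ f : Y → Finset X, f = fun b => A₀.filter (fun a => (a, b) ∈ G) := ⟨_, rfl⟩
  have hTsum : α * n * m / 2 ≤ ∑ b ∈ B, ((Tb b).card : ℝ) := by
    have h := double_count A₀ B (fun a b => (a, b) ∈ G)
    have h' : ∑ b ∈ B, ((Tb b).card : ℝ) = ∑ a ∈ A₀, ((Na a).card : ℝ) := by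
      simp only [hTb_def, hNa_def]
      exact_mod_cast congrArg (Nat.cast : ℕ → ℝ) h
    rw [h']; exact hA₀sum
  have hCS : (∑ b ∈ B, ((Tb b).card : ℝ)) ^ 2 ≤ m * ∑ b ∈ B, ((Tb b).card : ℝ) ^ 2 := by
    rw [hm_def]; exact sq_sum_le_card_mul_sum_sq
  -- bad pairs
  obtain ⟨Bad, hBad_def⟩ : ∃ P : X → X → Prop, P = fun a a' => ((Na a ∩ Na a').card : ℝ) < α ^ 3 * m / 256 := ⟨_, rfl⟩
  obtain ⟨badB, hbadB_def⟩ : ∃ f : Y → ℕ,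
      f = fun b => (((Tb b) ×ˢ (Tb b)).filter (fun q => Bad q.1 q.2)).card := ⟨_, rfl⟩
  have hbadsum : ∑ b ∈ B, ((badB b : ℝ)) ≤ α ^ 3 * m / 256 * n ^ 2 := by
    have key : ∀ b : Y, ((Tb b) ×ˢ (Tb b)).filter (fun q => Bad q.1 q.2)
        = ((A₀ ×ˢ A₀).filter (fun q => Bad q.1 q.2)).filter
            (fun q => (q.1, b) ∈ G ∧ (q.2, b) ∈ G) := by
      intro b
      ext q
      simp only [mem_filter, mem_product, hTb_def]
      tauto
    have hsum : ∑ b ∈ B, badB b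
        = ∑ q ∈ (A₀ ×ˢ A₀).filter (fun q => Bad q.1 q.2), (Na q.1 ∩ Na q.2).card := by
      have e1 : ∑ b ∈ B, badB b
          = ∑ b ∈ B, ((((A₀ ×ˢ A₀).filter (fun q => Bad q.1 q.2)).filter
              (fun q => (q.1, b) ∈ G ∧ (q.2, b) ∈ G)).card) := by
        apply Finset.sum_congr rfl
        intro b _
        simp only [hbadB_def]
        rw [key b]
      have e2 : ∑ b ∈ B, ((((A₀ ×ˢ A₀).filter (fun q => Bad q.1 q.2)).filter
              (fun q => (q.1, b) ∈ G ∧ (q.2, b) ∈ G)).card)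
          = ∑ q ∈ (A₀ ×ˢ A₀).filter (fun q => Bad q.1 q.2),
              (B.filter (fun b => (q.1, b) ∈ G ∧ (q.2, b) ∈ G)).card :=
        by simp_rw [Finset.card_filter]; exact Finset.sum_comm
      have e3 : ∑ q ∈ (A₀ ×ˢ A₀).filter (fun q => Bad q.1 q.2),
              (B.filter (fun b => (q.1, b) ∈ G ∧ (q.2, b) ∈ G)).card
          = ∑ q ∈ (A₀ ×ˢ A₀).filter (fun q => Bad q.1 q.2), (Na q.1 ∩ Na q.2).card := by
        apply Finset.sum_congr rfl
        intro q _
        congr 1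
        simp only [hNa_def]
        rw [Finset.filter_and]
      rw [e1, e2, e3]
    have hsum' : ∑ b ∈ B, ((badB b : ℝ))
        = ∑ q ∈ (A₀ ×ˢ A₀).filter (fun q => Bad q.1 q.2), ((Na q.1 ∩ Na q.2).card : ℝ) := by
      exact_mod_cast congrArg (Nat.cast : ℕ → ℝ) hsum
    rw [hsum']
    calc ∑ q ∈ (A₀ ×ˢ A₀).filter (fun q => Bad q.1 q.2), ((Na q.1 ∩ Na q.2).card : ℝ)
        ≤ ∑ _q ∈ (A₀ ×ˢ A₀).filter (fun q => Bad q.1 q.2), (α ^ 3 * m / 256) := by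
          apply Finset.sum_le_sum
          intro q hq
          have h := (mem_filter.1 hq).2
          rw [hBad_def] at h
          exact le_of_lt h
      _ = (((A₀ ×ˢ A₀).filter (fun q => Bad q.1 q.2)).card : ℝ) * (α ^ 3 * m / 256) := by
          rw [Finset.sum_const, nsmul_eq_mul]
      _ ≤ n ^ 2 * (α ^ 3 * m / 256) := by
          have h1 : (((A₀ ×ˢ A₀).filter (fun q => Bad q.1 q.2)).card : ℝ) ≤ n ^ 2 := by
            have : ((A₀ ×ˢ A₀).filter (fun q => Bad q.1 q.2)).card ≤ A.card * A.card := by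
              calc ((A₀ ×ˢ A₀).filter (fun q => Bad q.1 q.2)).card
                  ≤ (A₀ ×ˢ A₀).card := Finset.card_le_card (filter_subset _ _)
                _ = A₀.card * A₀.card := Finset.card_product _ _
                _ ≤ A.card * A.card := by
                    have h : A₀.card ≤ A.card := by
                      rw [hA₀_def]; exact Finset.card_le_card (filter_subset _ _)
                    exact Nat.mul_le_mul h h
            calc (((A₀ ×ˢ A₀).filter (fun q => Bad q.1 q.2)).card : ℝ)
                ≤ ((A.card * A.card : ℕ) : ℝ) := by exact_mod_cast this
              _ = n ^ 2 := by push_cast [hn_def]; ring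
          have h2 : (0:ℝ) ≤ α ^ 3 * m / 256 := by positivity
          exact mul_le_mul_of_nonneg_right h1 h2
      _ = α ^ 3 * m / 256 * n ^ 2 := by ring
  -- averaging: choose a good b
  have havg : ∃ b ∈ B, α ^ 2 * n ^ 2 / 8 ≤ ((Tb b).card : ℝ) ^ 2 - (32 / α) * (badB b : ℝ) := by
    apply Finset.exists_le_of_sum_le
    · exact Finset.card_pos.mp (Nat.pos_of_ne_zero hB0')
    · have hL : ∑ _b ∈ B, (α ^ 2 * n ^ 2 / 8) = m * (α ^ 2 * n ^ 2 / 8) := by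
        rw [Finset.sum_const, nsmul_eq_mul, hm_def]
      have hR : ∑ b ∈ B, (((Tb b).card : ℝ) ^ 2 - (32 / α) * (badB b : ℝ))
          = (∑ b ∈ B, ((Tb b).card : ℝ) ^ 2) - (32 / α) * ∑ b ∈ B, ((badB b : ℝ)) := by
        rw [Finset.sum_sub_distrib, Finset.mul_sum]
      rw [hL, hR]
      have hs0 : (0:ℝ) ≤ ∑ b ∈ B, ((Tb b).card : ℝ) := by positivity
      have h2 : α ^ 2 * n ^ 2 * m / 4 ≤ ∑ b ∈ B, ((Tb b).card : ℝ) ^ 2 := by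
        have hsq : (α * n * m / 2) ^ 2 ≤ (∑ b ∈ B, ((Tb b).card : ℝ)) ^ 2 := by
          apply pow_le_pow_left₀ (by positivity) hTsum
        have : m * (α ^ 2 * n ^ 2 * m / 4) ≤ m * ∑ b ∈ B, ((Tb b).card : ℝ) ^ 2 := by
          nlinarith [hsq, hCS]
        exact le_of_mul_le_mul_left this hm
      have h3 : (32 / α) * ∑ b ∈ B, ((badB b : ℝ)) ≤ α ^ 2 * n ^ 2 * m / 8 := by
        have hmono : (32 / α) * ∑ b ∈ B, ((badB b : ℝ))
            ≤ (32 / α) * (α ^ 3 * m / 256 * n ^ 2) := by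
          apply mul_le_mul_of_nonneg_left hbadsum (by positivity)
        have heq : (32 / α) * (α ^ 3 * m / 256 * n ^ 2) = α ^ 2 * n ^ 2 * m / 8 := by
          field_simp; ring
        linarith [hmono, heq ▸ hmono]
      linarith
  obtain ⟨b, hbB, hb⟩ := havg
  obtain ⟨T, hT_def⟩ : ∃ s : Finset X, s = Tb b := ⟨_, rfl⟩
  obtain ⟨t, ht_def⟩ : ∃ x : ℝ, x = (T.card : ℝ) := ⟨_, rfl⟩
  have hbad0 : (0:ℝ) ≤ (32 / α) * (badB b : ℝ) := by positivity
  have ht2 : α ^ 2 * n ^ 2 / 8 ≤ t ^ 2 := by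
    simp only [ht_def, hT_def]; linarith
  have ht0 : (0:ℝ) ≤ t := by simp only [ht_def]; positivity
  have ht3 : α * n / 3 ≤ t := by
    by_contra hcon
    push_neg at hcon
    nlinarith [ht2, ht0, hcon, mul_pos hα0 hn]
  have ht0' : (0:ℝ) < t := lt_of_lt_of_le (by positivity) ht3
  have hbadb : (badB b : ℝ) ≤ α * t ^ 2 / 32 := by
    have h1 : (32 / α) * (badB b : ℝ) ≤ t ^ 2 := by
      have : (0:ℝ) ≤ α ^ 2 * n ^ 2 / 8 := by positivity
      simp only [ht_def, hT_def]
      nlinarith [hb]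
    calc (badB b : ℝ) = (α / 32) * ((32 / α) * (badB b : ℝ)) := by field_simp
      _ ≤ (α / 32) * t ^ 2 := mul_le_mul_of_nonneg_left h1 (by positivity)
      _ = α * t ^ 2 / 32 := by ring
  -- define A'
  obtain ⟨badset, hbadset_def⟩ : ∃ f : X → Finset X, f = fun x => T.filter (fun a'' => Bad x a'') := ⟨_, rfl⟩
  obtain ⟨A', hA'_def⟩ : ∃ s : Finset X, s = T.filter (fun x => ((badset x).card : ℝ) ≤ α * t / 16) := ⟨_, rfl⟩
  have hbadsplit : ∑ x ∈ T, (badset x).card = badB b := by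
    simp only [hbadB_def, hbadset_def, hT_def]
    exact (card_filter_product (Tb b) (Tb b) Bad).symm
  obtain ⟨S, hS_def⟩ : ∃ s : Finset X, s = T.filter (fun x => ¬ (((badset x).card : ℝ) ≤ α * t / 16)) := ⟨_, rfl⟩
  have hScard : (S.card : ℝ) ≤ t / 2 := by
    have h1 : (S.card : ℝ) * (α * t / 16) ≤ ∑ x ∈ S, ((badset x).card : ℝ) := by
      have := Finset.card_nsmul_le_sum S (fun x => ((badset x).card : ℝ)) (α * t / 16)
        (fun x hx => by
          rw [hS_def, mem_filter] at hx
          exact le_of_lt (lt_of_not_ge hx.2))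
      rwa [nsmul_eq_mul] at this
    have h2 : ∑ x ∈ S, ((badset x).card : ℝ) ≤ ∑ x ∈ T, ((badset x).card : ℝ) := by
      apply Finset.sum_le_sum_of_subset_of_nonneg (by rw [hS_def]; exact filter_subset _ _)
      intro x _ _; positivity
    have h3 : ∑ x ∈ T, ((badset x).card : ℝ) = (badB b : ℝ) := by
      exact_mod_cast congrArg (Nat.cast : ℕ → ℝ) hbadsplit
    have h4 : (S.card : ℝ) * (α * t / 16) ≤ (t / 2) * (α * t / 16) := by
      have : (t / 2) * (α * t / 16) = α * t ^ 2 / 32 := by ring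
      rw [this]; linarith
    exact le_of_mul_le_mul_right h4 (by positivity)
  have hA'card : t / 2 ≤ (A'.card : ℝ) := by
    have h := card_filter_add_card_filter_not
      (s := T) (p := fun x => ((badset x).card : ℝ) ≤ α * t / 16)
    have hnat : A'.card + S.card = T.card := by
      rw [hA'_def, hS_def]; exact h
    have h' : (A'.card : ℝ) + (S.card : ℝ) = t := by
      rw [ht_def]; exact_mod_cast congrArg (Nat.cast : ℕ → ℝ) hnat
    linarith
  have hA'T : A' ⊆ T := by rw [hA'_def]; exact filter_subset _ _
  have hTA₀ : T ⊆ A₀ := by rw [hT_def, hTb_def]; exact filter_subset _ _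
  have hA₀A : A₀ ⊆ A := by rw [hA₀_def]; exact filter_subset _ _
  have hA'A : A' ⊆ A := fun x hx => hA₀A (hTA₀ (hA'T hx))
  -- define B'
  obtain ⟨nb, hnb_def⟩ : ∃ f : Y → Finset X, f = fun b' => A'.filter (fun a => (a, b') ∈ G) := ⟨_, rfl⟩
  obtain ⟨B', hB'_def⟩ : ∃ s : Finset Y,
      s = B.filter (fun b' => α * (A'.card : ℝ) / 4 ≤ ((nb b').card : ℝ)) := ⟨_, rfl⟩
  have hB'B : B' ⊆ B := by rw [hB'_def]; exact filter_subset _ _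
  -- edges from A' to B'
  have hdegA' : ∀ a ∈ A', α * m / 2 ≤ ((Na a).card : ℝ) := by
    intro a ha
    have : a ∈ A₀ := hTA₀ (hA'T ha)
    rw [hA₀_def] at this
    exact (mem_filter.1 this).2
  have hedgesA' : (A'.card : ℝ) * (α * m / 2) ≤ ∑ b' ∈ B, ((nb b').card : ℝ) := by
    have h1 : ∑ b' ∈ B, ((nb b').card : ℝ) = ∑ a ∈ A', ((Na a).card : ℝ) := by
      simp only [hnb_def, hNa_def]
      exact_mod_cast congrArg (Nat.cast : ℕ → ℝ) (double_count A' B (fun a b' => (a, b') ∈ G))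
    rw [h1]
    have := Finset.card_nsmul_le_sum A' (fun a => ((Na a).card : ℝ)) (α * m / 2) hdegA'
    rwa [nsmul_eq_mul] at this
  have hB'edges : α * (A'.card : ℝ) * m / 4 ≤ ∑ b' ∈ B', ((nb b').card : ℝ) := by
    have hsplit : ∑ b' ∈ B \ B', ((nb b').card : ℝ) + ∑ b' ∈ B', ((nb b').card : ℝ)
        = ∑ b' ∈ B, ((nb b').card : ℝ) := Finset.sum_sdiff hB'B
    have hlow : ∑ b' ∈ B \ B', ((nb b').card : ℝ) ≤ m * (α * (A'.card : ℝ) / 4) := by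
      calc ∑ b' ∈ B \ B', ((nb b').card : ℝ)
          ≤ ∑ _b' ∈ B \ B', (α * (A'.card : ℝ) / 4) := by
            apply Finset.sum_le_sum
            intro b' hb'
            rw [mem_sdiff] at hb'
            by_contra hcon
            push_neg at hcon
            apply hb'.2
            rw [hB'_def, mem_filter]
            exact ⟨hb'.1, le_of_lt hcon⟩
        _ = (((B \ B').card : ℝ)) * (α * (A'.card : ℝ) / 4) := by
            rw [Finset.sum_const, nsmul_eq_mul]
        _ ≤ m * (α * (A'.card : ℝ) / 4) := by
            apply mul_le_mul_of_nonneg_right _ (by positivity)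
            rw [hm_def]
            exact_mod_cast Finset.card_le_card (sdiff_subset)
    linarith [hedgesA', hlow, hsplit]
  -- the intersection count
  have hGcap : ((G ∩ (A' ×ˢ B')).card : ℝ) = ∑ b' ∈ B', ((nb b').card : ℝ) := by
    have hset : G ∩ (A' ×ˢ B') = (A' ×ˢ B').filter (fun q => (q.1, q.2) ∈ G) := by
      ext p
      simp only [mem_inter, mem_filter]
      exact ⟨fun h => ⟨h.2, h.1⟩, fun h => ⟨h.2, h.1⟩⟩
    have e2 : ((A' ×ˢ B').filter (fun q => (q.1, q.2) ∈ G)).card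
        = ∑ a ∈ A', (B'.filter (fun b' => (a, b') ∈ G)).card :=
      card_filter_product A' B' (fun a b' => (a, b') ∈ G)
    have e3 : ∑ b' ∈ B', (A'.filter (fun a => (a, b') ∈ G)).card
        = ∑ a ∈ A', (B'.filter (fun b' => (a, b') ∈ G)).card :=
      double_count A' B' (fun a b' => (a, b') ∈ G)
    have hcard : (G ∩ (A' ×ˢ B')).card = ∑ b' ∈ B', (nb b').card := by
      rw [hset, e2, ← e3]
      apply Finset.sum_congr rfl
      intro b' _
      rw [hnb_def]
    rw [hcard]; push_cast; ring
  refine ⟨A', hA'A, B', hB'B, ?_, ?_, ?_⟩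
  · -- paths of length 3
    intro a' ha' b' hb'
    have hnbcard : α * (A'.card : ℝ) / 4 ≤ ((nb b').card : ℝ) := by
      rw [hB'_def] at hb'
      exact (mem_filter.1 hb').2
    have hbada' : ((badset a').card : ℝ) ≤ α * t / 16 := by
      rw [hA'_def] at ha'
      exact (mem_filter.1 ha').2
    obtain ⟨Gd, hGd_def⟩ : ∃ s : Finset X, s = (nb b') \ (badset a') := ⟨_, rfl⟩
    have hGdcard : α * t / 16 ≤ (Gd.card : ℝ) := by
      have hsd := Finset.card_le_card_sdiff_add_card (s := nb b') (t := badset a')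
      have hsd' : ((nb b').card : ℝ) ≤ (Gd.card : ℝ) + ((badset a').card : ℝ) := by
        simp only [hGd_def]
        exact_mod_cast hsd
      have h8 : α * t / 8 ≤ α * (A'.card : ℝ) / 4 := by nlinarith [hA'card, hα0.le]
      linarith
    have hGdprop : ∀ a ∈ Gd, α ^ 3 * m / 256 ≤ ((Na a' ∩ Na a).card : ℝ) ∧ (a, b') ∈ G := by
      intro a ha
      rw [hGd_def, mem_sdiff] at ha
      obtain ⟨hanb, hanbad⟩ := ha
      have haA' : a ∈ A' := by
        rw [hnb_def] at hanb
        exact (mem_filter.1 hanb).1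
      have hab' : (a, b') ∈ G := by
        rw [hnb_def] at hanb
        exact (mem_filter.1 hanb).2
      have haT : a ∈ T := hA'T haA'
      have hnotbad : ¬ Bad a' a := by
        intro hbad
        apply hanbad
        rw [hbadset_def, mem_filter]
        exact ⟨haT, hbad⟩
      rw [hBad_def] at hnotbad
      exact ⟨le_of_not_gt hnotbad, hab'⟩
    have hGdA : Gd ⊆ A := by
      intro a ha
      rw [hGd_def, mem_sdiff] at ha
      have : a ∈ A' := by
        have := ha.1
        rw [hnb_def] at this
        exact (mem_filter.1 this).1
      exact hA'A this
    have hPcard : (((A ×ˢ B).filter fun p => (a', p.2) ∈ G ∧ p ∈ G ∧ (p.1, b') ∈ G)).card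
        = ∑ a ∈ A, (B.filter (fun y => (a', y) ∈ G ∧ (a, y) ∈ G ∧ (a, b') ∈ G)).card :=
      card_filter_product A B (fun a y => (a', y) ∈ G ∧ (a, y) ∈ G ∧ (a, b') ∈ G)
    have hsum1 : ∑ a ∈ Gd, ((Na a' ∩ Na a).card : ℝ)
        ≤ ((((A ×ˢ B).filter fun p => (a', p.2) ∈ G ∧ p ∈ G ∧ (p.1, b') ∈ G)).card : ℝ) := by
      have hstep : ∀ a ∈ Gd, (Na a' ∩ Na a).card
          ≤ (B.filter (fun y => (a', y) ∈ G ∧ (a, y) ∈ G ∧ (a, b') ∈ G)).card := by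
        intro a ha
        apply Finset.card_le_card
        intro y hy
        simp only [hNa_def, mem_inter, mem_filter] at hy
        rw [mem_filter]
        exact ⟨hy.1.1, hy.1.2, hy.2.2, (hGdprop a ha).2⟩
      calc ∑ a ∈ Gd, ((Na a' ∩ Na a).card : ℝ)
          ≤ ∑ a ∈ Gd, ((B.filter (fun y => (a', y) ∈ G ∧ (a, y) ∈ G ∧ (a, b') ∈ G)).card : ℝ) := by
            apply Finset.sum_le_sum
            intro a ha
            exact_mod_cast hstep a ha
        _ ≤ ∑ a ∈ A, ((B.filter (fun y => (a', y) ∈ G ∧ (a, y) ∈ G ∧ (a, b') ∈ G)).card : ℝ) := by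
            apply Finset.sum_le_sum_of_subset_of_nonneg hGdA
            intro a _ _; positivity
        _ = ((((A ×ˢ B).filter fun p => (a', p.2) ∈ G ∧ p ∈ G ∧ (p.1, b') ∈ G)).card : ℝ) := by
            rw [hPcard]; push_cast; ring
    have hsum2 : (Gd.card : ℝ) * (α ^ 3 * m / 256) ≤ ∑ a ∈ Gd, ((Na a' ∩ Na a).card : ℝ) := by
      have := Finset.card_nsmul_le_sum Gd (fun a => ((Na a' ∩ Na a).card : ℝ))
        (α ^ 3 * m / 256) (fun a ha => (hGdprop a ha).1)
      rwa [nsmul_eq_mul] at this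
    have hfinal : α ^ 5 * n * m / 2 ^ 17 ≤ (Gd.card : ℝ) * (α ^ 3 * m / 256) := by
      have h1 : (α * t / 16) * (α ^ 3 * m / 256) ≤ (Gd.card : ℝ) * (α ^ 3 * m / 256) :=
        mul_le_mul_of_nonneg_right hGdcard (by positivity)
      have h2 : (α * (α * n / 3) / 16) * (α ^ 3 * m / 256) ≤ (α * t / 16) * (α ^ 3 * m / 256) := by
        have : α * (α * n / 3) / 16 ≤ α * t / 16 := by nlinarith [ht3, hα0.le]
        exact mul_le_mul_of_nonneg_right this (by positivity)
      have h3 : α ^ 5 * n * m / 2 ^ 17 ≤ (α * (α * n / 3) / 16) * (α ^ 3 * m / 256) := by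
        have hpos : (0:ℝ) ≤ α ^ 5 * n * m := by positivity
        nlinarith [hpos]
      linarith
    linarith
  · rw [hGcap]; exact hB'edges
  · -- α² n m / 32 ≤ α |A'| m / 4
    have h6 : α * n / 6 ≤ (A'.card : ℝ) := by linarith
    have := mul_le_mul_of_nonneg_left h6 (show (0:ℝ) ≤ α * m / 4 by positivity)
    have hpos : (0:ℝ) ≤ α ^ 2 * n * m := by positivity
    nlinarith [this, hpos]
end

section
/- There is an absolute constant C > 0 with the following property. Let A, B, S be finite subsets of an abelian group, let N ≥ 1 and t > 0 with |A||B| ≤ N² and |S| ≤ tN, and let 0 < α < 1. Then there exist an integer k ≤ C/α and subsets A₁,…,A_k ⊆ A and B₁,…,B_k ⊆ B such that (i) the remainder set R = {(a,b) ∈ A×B : a+b ∈ S} \ ⋃_{i=1}^k (A_i × B_i) has size at most αN², and (ii) |A_i + B_i| ≤ C·(1/α)⁵·t³·N for each i = 1,…,k. -/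
open Finset Pointwise

set_option linter.unusedSectionVars false
set_option maxHeartbeats 4000000

section BSG

variable {γ : Type} [AddCommGroup γ] [DecidableEq γ]

private lemma indicator_card (H : Finset (γ × γ)) (A' B' : Finset γ) :
    (((A' ×ˢ B') ∩ H).card : ℝ) = ∑ a ∈ A', ∑ b ∈ B', (if (a, b) ∈ H then (1:ℝ) else 0) := by
  classical
  rw [← Finset.filter_mem_eq_inter, Finset.card_filter]
  push_cast
  rw [Finset.sum_product]

private lemma indicator_row (H : Finset (γ × γ)) (B' : Finset γ) (a : γ) :
    (((B'.filter fun b => (a, b) ∈ H).card : ℝ)) = ∑ b ∈ B', (if (a, b) ∈ H then (1:ℝ) else 0) := by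
  classical
  rw [Finset.card_filter]
  push_cast
  rfl

private lemma bsg_step (A B S : Finset γ) (H : Finset (γ × γ)) (N t β : ℝ)
    (hH : H ⊆ A ×ˢ B) (hsum : ∀ p ∈ H, p.1 + p.2 ∈ S)
    (hN : 1 ≤ N) (ht : 0 < t) (hβ : 0 < β)
    (hAB : (A.card : ℝ) * B.card ≤ N ^ 2) (hS : (S.card : ℝ) ≤ t * N)
    (he : β * N ^ 2 ≤ H.card) :
    ∃ A' B' : Finset γ, A' ⊆ A ∧ B' ⊆ B ∧
      β ^ 2 * N ^ 2 / 12 ≤ ((H ∩ A' ×ˢ B').card : ℝ) ∧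
      ((A' + B').card : ℝ) ≤ 24576 * t ^ 3 * N / β ^ 5 := by
  classical
  have hN0 : (0:ℝ) < N := lt_of_lt_of_le one_pos hN
  have heR : (0:ℝ) < (H.card : ℝ) := lt_of_lt_of_le (by positivity) he
  have hHne : H.Nonempty := Finset.card_pos.1 (by exact_mod_cast heR)
  obtain ⟨p₀, hp₀⟩ := hHne
  have hAne : A.Nonempty := ⟨p₀.1, (Finset.mem_product.1 (hH hp₀)).1⟩
  have hBne : B.Nonempty := ⟨p₀.2, (Finset.mem_product.1 (hH hp₀)).2⟩
  set M : ℝ := (A.card : ℝ) with hMdef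
  set n : ℝ := (B.card : ℝ) with hndef
  set E : ℝ := (H.card : ℝ) with hEdef
  have hM1 : (1:ℝ) ≤ M := by
    have h : 1 ≤ A.card := Finset.card_pos.2 hAne
    rw [hMdef]; exact_mod_cast h
  have hn1 : (1:ℝ) ≤ n := by
    have h : 1 ≤ B.card := Finset.card_pos.2 hBne
    rw [hndef]; exact_mod_cast h
  have hM0 : (0:ℝ) < M := lt_of_lt_of_le one_pos hM1
  have hn0 : (0:ℝ) < n := lt_of_lt_of_le one_pos hn1
  have hE0 : (0:ℝ) < E := heR
  have hEMn : E ≤ M * n := by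
    have h1 : H.card ≤ (A ×ˢ B).card := Finset.card_le_card hH
    have h2 : (A ×ˢ B).card = A.card * B.card := Finset.card_product A B
    rw [hEdef, hMdef, hndef]
    exact_mod_cast h2 ▸ h1
  -- degrees in H
  set dg : γ → ℝ := fun a => ((B.filter fun b => (a, b) ∈ H).card : ℝ) with hdg
  set A₀ : Finset γ := A.filter (fun a => E ≤ 2 * M * dg a) with hA₀def
  have hA₀A : A₀ ⊆ A := Finset.filter_subset _ _
  set H₀ : Finset (γ × γ) := H.filter (fun p => p.1 ∈ A₀) with hH₀def
  have hH₀H : H₀ ⊆ H := Finset.filter_subset _ _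
  set x : γ → γ → ℝ := fun a b => if (a, b) ∈ H₀ then 1 else 0 with hx
  have hxdef : ∀ a b, x a b = if (a, b) ∈ H₀ then 1 else 0 := fun _ _ => rfl
  have hdgdef : ∀ a, dg a = ((B.filter fun b => (a, b) ∈ H).card : ℝ) := fun _ => rfl
  clear_value x
  have hx0 : ∀ a b, 0 ≤ x a b := fun a b => by rw [hxdef]; split <;> norm_num
  have hx1 : ∀ a b, x a b ≤ 1 := fun a b => by rw [hxdef]; split <;> norm_num
  -- for a ∈ A₀, row sum of x equals dg a
  clear_value H₀
  clear_value A₀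
  clear_value dg
  clear_value E
  clear_value n
  clear_value M
  have hrow₀ : ∀ a ∈ A₀, ∑ b ∈ B, x a b = dg a := by
    intro a ha
    rw [hdgdef, indicator_row H B a]
    apply Finset.sum_congr rfl
    intro b _
    rw [hxdef]
    have : (a, b) ∈ H₀ ↔ (a, b) ∈ H := by
      rw [hH₀def, Finset.mem_filter]
      exact ⟨fun h => h.1, fun h => ⟨h, ha⟩⟩
    simp [this]
  have hrow_zero : ∀ a, a ∉ A₀ → ∀ b, x a b = 0 := by
    intro a ha b
    rw [hxdef, if_neg]
    rw [hH₀def, Finset.mem_filter]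
    rintro ⟨-, h⟩
    exact ha h
  -- min-degree on A₀
  have hmindeg : ∀ a ∈ A₀, E / (2 * M) ≤ dg a := by
    intro a ha
    rw [hA₀def, Finset.mem_filter] at ha
    rw [div_le_iff₀ (by linarith only [hM1] : (0:ℝ) < 2 * M)]
    linarith only [ha.2]
  -- E = ∑_{a ∈ A} dg a
  have hEsum : E = ∑ a ∈ A, dg a := by
    have h1 : H = (A ×ˢ B) ∩ H := (Finset.inter_eq_right.2 hH).symm
    rw [hEdef]
    rw [show (H.card : ℝ) = (((A ×ˢ B) ∩ H).card : ℝ) by rw [← h1]]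
    rw [indicator_card H A B]
    exact Finset.sum_congr rfl fun a _ => by rw [hdgdef]; exact (indicator_row H B a).symm
  -- step 0 : ∑_{a∈A₀} dg a ≥ E/2
  have hstep0 : E / 2 ≤ ∑ a ∈ A₀, dg a := by
    have hsplit : ∑ a ∈ A, dg a =
        ∑ a ∈ A.filter (fun a => E ≤ 2 * M * dg a), dg a +
        ∑ a ∈ A.filter (fun a => ¬ (E ≤ 2 * M * dg a)), dg a :=
      (Finset.sum_filter_add_sum_filter_not A _ dg).symm
    have hbad : ∑ a ∈ A.filter (fun a => ¬ (E ≤ 2 * M * dg a)), dg a ≤ E / 2 := by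
      have hub : ∀ a ∈ A.filter (fun a => ¬ (E ≤ 2 * M * dg a)), dg a ≤ E / (2 * M) := by
        intro a ha
        rw [Finset.mem_filter] at ha
        have := ha.2
        rw [le_div_iff₀ (by linarith only [hM1] : (0:ℝ) < 2 * M)]
        push_neg at this
        nlinarith only [this]
      calc ∑ a ∈ A.filter (fun a => ¬ (E ≤ 2 * M * dg a)), dg a
          ≤ (A.filter (fun a => ¬ (E ≤ 2 * M * dg a))).card * (E / (2 * M)) := by
            have := Finset.sum_le_card_nsmul _ _ _ hub
            simpa [nsmul_eq_mul] using this
        _ ≤ M * (E / (2 * M)) := by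
            apply mul_le_mul_of_nonneg_right _ (div_nonneg hE0.le (by linarith only [hM1]))
            rw [hMdef]
            exact_mod_cast Finset.card_le_card (Finset.filter_subset _ _)
        _ = E / 2 := by
            have hMne : M ≠ 0 := ne_of_gt hM0
            field_simp
    rw [hA₀def]
    linarith only [hEsum, hsplit, hbad]

  -- column sums and codegrees
  set r : γ → ℝ := fun b => ∑ a ∈ A₀, x a b with hr
  have hrdef : ∀ b, r b = ∑ a ∈ A₀, x a b := fun _ => rfl
  clear_value r
  set dd : γ → γ → ℝ := fun a a' => ∑ b ∈ B, x a b * x a' b with hdd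
  have hdddef : ∀ a a', dd a a' = ∑ b ∈ B, x a b * x a' b := fun _ _ => rfl
  clear_value dd
  have hdd0 : ∀ a a', 0 ≤ dd a a' := fun a a' => by
    rw [hdddef]; exact Finset.sum_nonneg fun b _ => mul_nonneg (hx0 _ _) (hx0 _ _)
  set θ : ℝ := E ^ 3 / (512 * M ^ 3 * n ^ 3) with hθ
  have hθ0 : 0 < θ := by rw [hθ]; positivity
  clear_value θ
  set ε : ℝ := E / (64 * M * n) with hε
  have hε0 : 0 < ε := by rw [hε]; positivity
  clear_value ε
  set lam : ℝ := 64 * M * n / E with hlam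
  have hlam0 : 0 < lam := by rw [hlam]; positivity
  clear_value lam
  set bb : γ → γ → ℝ := fun a a' => if dd a a' < θ * n then 1 else 0 with hbb
  have hbbdef : ∀ a a', bb a a' = if dd a a' < θ * n then 1 else 0 := fun _ _ => rfl
  clear_value bb
  have hbb0 : ∀ a a', 0 ≤ bb a a' := fun a a' => by rw [hbbdef]; split <;> norm_num
  have hbb1 : ∀ a a', bb a a' ≤ 1 := fun a a' => by rw [hbbdef]; split <;> norm_num
  set badwt : γ → ℝ := fun b => ∑ a ∈ A₀, x a b * (∑ a' ∈ A₀, x a' b * bb a a') with hbw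
  have hbwdef : ∀ b, badwt b = ∑ a ∈ A₀, x a b * (∑ a' ∈ A₀, x a' b * bb a a') := fun _ => rfl
  clear_value badwt
  have hbw0 : ∀ b, 0 ≤ badwt b := fun b => by
    rw [hbwdef]
    exact Finset.sum_nonneg fun a _ => mul_nonneg (hx0 _ _)
      (Finset.sum_nonneg fun a' _ => mul_nonneg (hx0 _ _) (hbb0 _ _))
  have hA₀M : ((A₀.card : ℕ) : ℝ) ≤ M := by
    rw [hMdef]; exact_mod_cast Finset.card_le_card hA₀A
  -- total bad weight bound
  have hbwsum : ∑ b ∈ B, badwt b ≤ θ * n * M ^ 2 := by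
    have h1 : ∑ b ∈ B, badwt b = ∑ a ∈ A₀, ∑ a' ∈ A₀, bb a a' * dd a a' := by
      rw [Finset.sum_congr rfl fun b _ => hbwdef b, Finset.sum_comm]
      refine Finset.sum_congr rfl fun a _ => ?_
      simp_rw [Finset.mul_sum]
      rw [Finset.sum_comm]
      refine Finset.sum_congr rfl fun a' _ => ?_
      rw [hdddef, Finset.mul_sum]
      exact Finset.sum_congr rfl fun b _ => by ring
    rw [h1]
    have h2 : ∀ a ∈ A₀, ∀ a' ∈ A₀, bb a a' * dd a a' ≤ θ * n := by
      intro a _ a' _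
      rw [hbbdef]
      split
      · rename_i h; rw [one_mul]; linarith only [h]
      · rw [zero_mul]; positivity
    calc ∑ a ∈ A₀, ∑ a' ∈ A₀, bb a a' * dd a a'
        ≤ ∑ a ∈ A₀, ∑ a' ∈ A₀, θ * n :=
          Finset.sum_le_sum fun a ha => Finset.sum_le_sum fun a' ha' => h2 a ha a' ha'
      _ = (A₀.card : ℝ) * ((A₀.card : ℝ) * (θ * n)) := by
          rw [Finset.sum_const, nsmul_eq_mul, Finset.sum_const, nsmul_eq_mul]
      _ ≤ θ * n * M ^ 2 := by
          have hc0 : (0:ℝ) ≤ ((A₀.card : ℕ) : ℝ) := Nat.cast_nonneg _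
          have hcc : ((A₀.card : ℕ) : ℝ) * ((A₀.card : ℕ) : ℝ) ≤ M * M :=
            mul_le_mul hA₀M hA₀M hc0 (by linarith only [hM1])
          have hθn : (0:ℝ) ≤ θ * n := by positivity
          nlinarith only [mul_le_mul_of_nonneg_right hcc hθn]
  -- Cauchy-Schwarz
  have hrsum : ∑ b ∈ B, r b = ∑ a ∈ A₀, dg a := by
    rw [Finset.sum_congr rfl fun b _ => hrdef b, Finset.sum_comm]
    exact Finset.sum_congr rfl fun a ha => hrow₀ a ha
  have he₀ : E / 2 ≤ ∑ b ∈ B, r b := by rw [hrsum]; exact hstep0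
  have hCS : (∑ b ∈ B, r b) ^ 2 ≤ n * ∑ b ∈ B, (r b) ^ 2 := by
    have h := sq_sum_le_card_mul_sum_sq (s := B) (f := r)
    rw [hndef]; exact_mod_cast h
  have hrsq : E ^ 2 / (4 * n) ≤ ∑ b ∈ B, (r b) ^ 2 := by
    rw [div_le_iff₀ (by linarith only [hn1] : (0:ℝ) < 4 * n)]
    nlinarith only [he₀, hCS, hE0, hn0]
  have hFsum : E ^ 2 / (8 * n) ≤ ∑ b ∈ B, ((r b) ^ 2 - lam * badwt b) := by
    rw [Finset.sum_sub_distrib, ← Finset.mul_sum]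
    have h2 : lam * ∑ b ∈ B, badwt b ≤ E ^ 2 / (8 * n) := by
      have h3 : lam * (θ * n * M ^ 2) = E ^ 2 / (8 * n) := by
        rw [hlam, hθ]; field_simp; ring
      calc lam * ∑ b ∈ B, badwt b ≤ lam * (θ * n * M ^ 2) :=
            mul_le_mul_of_nonneg_left hbwsum hlam0.le
        _ = E ^ 2 / (8 * n) := h3
    have h4 : E ^ 2 / (4 * n) - E ^ 2 / (8 * n) = E ^ 2 / (8 * n) := by ring
    linarith only [hrsq, h2, h4]
  -- choose b₀
  have hEx : ∃ b₀ ∈ B, E ^ 2 / (8 * n ^ 2) ≤ (r b₀) ^ 2 - lam * badwt b₀ := by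
    apply Finset.exists_le_of_sum_le hBne
    rw [Finset.sum_const, nsmul_eq_mul]
    have h5 : ((B.card : ℕ) : ℝ) * (E ^ 2 / (8 * n ^ 2)) = E ^ 2 / (8 * n) := by
      rw [← hndef]; field_simp
    rw [h5]
    exact hFsum
  obtain ⟨b₀, hb₀B, hb₀⟩ := hEx
  -- A₁
  set A₁ : Finset γ := A₀.filter (fun a => (a, b₀) ∈ H₀) with hA₁def
  have hA₁A₀ : A₁ ⊆ A₀ := Finset.filter_subset _ _
  have hA₁r : ((A₁.card : ℕ) : ℝ) = r b₀ := by
    have h6 : ((A₁.card : ℕ) : ℝ) = ∑ a ∈ A₀, (if (a, b₀) ∈ H₀ then (1:ℝ) else 0) := by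
      rw [hA₁def, Finset.card_filter]; push_cast; rfl
    rw [h6, hrdef]
    exact Finset.sum_congr rfl fun a _ => (hxdef a b₀).symm
  have hrb₀0 : 0 ≤ r b₀ := by rw [← hA₁r]; positivity
  have hrb₀sq : E ^ 2 / (8 * n ^ 2) ≤ (r b₀) ^ 2 := by
    have h8 : 0 ≤ lam * badwt b₀ := mul_nonneg hlam0.le (hbw0 b₀)
    linarith only [hb₀, h8]
  have hrb₀ : E / (3 * n) ≤ r b₀ := by
    have h9 : E ^ 2 ≤ 8 * n ^ 2 * (r b₀) ^ 2 := by
      have h9' := hrb₀sq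
      rw [div_le_iff₀ (by positivity : (0:ℝ) < 8 * n ^ 2)] at h9'
      linarith only [h9']
    rw [div_le_iff₀ (by linarith only [hn1] : (0:ℝ) < 3 * n)]
    by_contra hcon
    push_neg at hcon
    have h10 : r b₀ * (3 * n) * (r b₀ * (3 * n)) < E * E :=
      mul_self_lt_mul_self (by positivity) hcon
    nlinarith only [h10, h9, sq_nonneg (n * r b₀)]
  have hbadb₀ : lam * badwt b₀ ≤ (r b₀) ^ 2 := by
    have h7 : (0:ℝ) ≤ E ^ 2 / (8 * n ^ 2) := by positivity
    linarith only [hb₀, h7]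
  -- bad count inside A₁
  have key : ∀ f : γ → ℝ, ∑ a ∈ A₀, x a b₀ * f a = ∑ a ∈ A₁, f a := by
    intro f
    rw [hA₁def, Finset.sum_filter]
    refine Finset.sum_congr rfl fun a _ => ?_
    by_cases h : (a, b₀) ∈ H₀
    · rw [if_pos h, hxdef, if_pos h, one_mul]
    · rw [if_neg h, hxdef, if_neg h, zero_mul]
  have hbadA₁ : badwt b₀ = ∑ a ∈ A₁, ∑ a' ∈ A₁, bb a a' := by
    rw [hbwdef, key (fun a => ∑ a' ∈ A₀, x a' b₀ * bb a a')]
    exact Finset.sum_congr rfl fun a _ => key (fun a' => bb a a')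
  have hA₁pos : (0:ℝ) < ((A₁.card : ℕ) : ℝ) := by
    rw [hA₁r]; calc (0:ℝ) < E / (3 * n) := by positivity
      _ ≤ r b₀ := hrb₀

  clear_value A₁
  -- A' : vertices of A₁ in few bad pairs
  set A' : Finset γ := A₁.filter (fun a => (∑ a' ∈ A₁, bb a a') ≤ 4 * ε * ((A₁.card : ℕ) : ℝ)) with hA'def
  have hA'A₁ : A' ⊆ A₁ := Finset.filter_subset _ _
  have hA'card : 3 / 4 * ((A₁.card : ℕ) : ℝ) ≤ ((A'.card : ℕ) : ℝ) := by
    set T := A₁.filter (fun a => ¬ ((∑ a' ∈ A₁, bb a a') ≤ 4 * ε * ((A₁.card : ℕ) : ℝ))) with hTdef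
    have hsplitc : A'.card + T.card = A₁.card := Finset.card_filter_add_card_filter_not _
    have hTbound : ((T.card : ℕ) : ℝ) * (4 * ε * ((A₁.card : ℕ) : ℝ)) ≤ ε * ((A₁.card : ℕ) : ℝ) ^ 2 := by
      have hlb : ∀ a ∈ T, 4 * ε * ((A₁.card : ℕ) : ℝ) ≤ ∑ a' ∈ A₁, bb a a' := by
        intro a ha
        rw [hTdef, Finset.mem_filter] at ha
        exact le_of_lt (not_le.1 ha.2)
      calc ((T.card : ℕ) : ℝ) * (4 * ε * ((A₁.card : ℕ) : ℝ))
          ≤ ∑ a ∈ T, ∑ a' ∈ A₁, bb a a' := by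
            have := Finset.card_nsmul_le_sum T _ _ hlb
            simpa [nsmul_eq_mul] using this
        _ ≤ ∑ a ∈ A₁, ∑ a' ∈ A₁, bb a a' := by
            apply Finset.sum_le_sum_of_subset_of_nonneg (Finset.filter_subset _ _)
            intro a _ _
            exact Finset.sum_nonneg fun a' _ => hbb0 a a'
        _ = badwt b₀ := hbadA₁.symm
        _ ≤ ε * ((A₁.card : ℕ) : ℝ) ^ 2 := by
            have hεlam : ε * lam = 1 := by rw [hε, hlam]; field_simp
            have h11 : badwt b₀ = ε * (lam * badwt b₀) := by
              rw [← mul_assoc, hεlam, one_mul]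
            rw [h11, hA₁r]
            exact mul_le_mul_of_nonneg_left hbadb₀ hε0.le
    have hT4 : ((T.card : ℕ) : ℝ) ≤ ((A₁.card : ℕ) : ℝ) / 4 := by
      have hpos : 0 < ε * ((A₁.card : ℕ) : ℝ) := mul_pos hε0 hA₁pos
      have h19 : ((T.card : ℕ) : ℝ) * 4 * (ε * ((A₁.card : ℕ) : ℝ))
          ≤ ((A₁.card : ℕ) : ℝ) * (ε * ((A₁.card : ℕ) : ℝ)) := by nlinarith only [hTbound]
      have h20 := le_of_mul_le_mul_right h19 hpos
      linarith only [h20]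
    have hcast : ((A'.card : ℕ) : ℝ) + ((T.card : ℕ) : ℝ) = ((A₁.card : ℕ) : ℝ) := by
      exact_mod_cast congrArg (Nat.cast : ℕ → ℝ) hsplitc
    linarith only [hcast, hT4]
  clear_value A'
  -- B' : columns with many neighbours in A₁
  set B' : Finset γ := B.filter (fun b => 8 * ε * ((A₁.card : ℕ) : ℝ) ≤ ∑ a ∈ A₁, x a b) with hB'def
  have hB'B : B' ⊆ B := Finset.filter_subset _ _
  clear_value B'
  have hA'A : A' ⊆ A := subset_trans hA'A₁ (subset_trans hA₁A₀ hA₀A)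
  -- captured edges
  have hcap : β ^ 2 * N ^ 2 / 12 ≤ ((H ∩ A' ×ˢ B').card : ℝ) := by
    have hsub : ((A' ×ˢ B') ∩ H₀).card ≤ (H ∩ A' ×ˢ B').card := by
      apply Finset.card_le_card
      intro p hp
      rw [Finset.mem_inter] at hp ⊢
      exact ⟨hH₀H hp.2, hp.1⟩
    have hid : (((A' ×ˢ B') ∩ H₀).card : ℝ) = ∑ a ∈ A', ∑ b ∈ B', x a b := by
      rw [indicator_card H₀ A' B']
      exact Finset.sum_congr rfl fun a _ => Finset.sum_congr rfl fun b _ => (hxdef a b).symm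
    have hrowlb : ∀ a ∈ A', E / (2 * M) ≤ ∑ b ∈ B, x a b := by
      intro a ha
      have haA₀ : a ∈ A₀ := hA₁A₀ (hA'A₁ ha)
      rw [hrow₀ a haA₀]
      exact hmindeg a haA₀
    have hout : ∑ a ∈ A', ∑ b ∈ B \ B', x a b ≤ n * (8 * ε * ((A₁.card : ℕ) : ℝ)) := by
      rw [Finset.sum_comm]
      calc ∑ b ∈ B \ B', ∑ a ∈ A', x a b
          ≤ ∑ b ∈ B \ B', ∑ a ∈ A₁, x a b := by
            apply Finset.sum_le_sum
            intro b _
            exact Finset.sum_le_sum_of_subset_of_nonneg hA'A₁ fun a _ _ => hx0 a b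
        _ ≤ ∑ _b ∈ B \ B', (8 * ε * ((A₁.card : ℕ) : ℝ)) := by
            apply Finset.sum_le_sum
            intro b hb
            rw [Finset.mem_sdiff] at hb
            have hb2 := hb.2
            rw [hB'def, Finset.mem_filter] at hb2
            push_neg at hb2
            exact le_of_lt (hb2 hb.1)
        _ ≤ n * (8 * ε * ((A₁.card : ℕ) : ℝ)) := by
            rw [Finset.sum_const, nsmul_eq_mul]
            have hcard : (((B \ B').card : ℕ) : ℝ) ≤ n := by
              rw [hndef]
              exact_mod_cast Finset.card_le_card Finset.sdiff_subset
            have h0 : (0:ℝ) ≤ 8 * ε * ((A₁.card : ℕ) : ℝ) := by nlinarith only [hε0, hA₁pos]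
            exact mul_le_mul_of_nonneg_right hcard h0
    have hmain : ((A'.card : ℕ) : ℝ) * (E / (2 * M)) - n * (8 * ε * ((A₁.card : ℕ) : ℝ))
        ≤ ∑ a ∈ A', ∑ b ∈ B', x a b := by
      have hsplitB : ∀ a, ∑ b ∈ B', x a b = ∑ b ∈ B, x a b - ∑ b ∈ B \ B', x a b := by
        intro a
        rw [← Finset.sum_sdiff hB'B]
        ring
      rw [Finset.sum_congr rfl fun a _ => hsplitB a, Finset.sum_sub_distrib]
      have h12 : ((A'.card : ℕ) : ℝ) * (E / (2 * M)) ≤ ∑ a ∈ A', ∑ b ∈ B, x a b := by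
        have := Finset.card_nsmul_le_sum A' _ _ hrowlb
        simpa [nsmul_eq_mul] using this
      linarith only [hout, h12]
    -- numeric chain
    have hA₁lb : E / (3 * n) ≤ ((A₁.card : ℕ) : ℝ) := by rw [hA₁r]; exact hrb₀
    have hnum : β ^ 2 * N ^ 2 / 12 ≤ ((A'.card : ℕ) : ℝ) * (E / (2 * M)) - n * (8 * ε * ((A₁.card : ℕ) : ℝ)) := by
      have h8εn : n * (8 * ε * ((A₁.card : ℕ) : ℝ)) = E / (8 * M) * ((A₁.card : ℕ) : ℝ) := by
        rw [hε]; field_simp; ring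
      have h13 : 3 / 4 * ((A₁.card : ℕ) : ℝ) * (E / (2 * M)) ≤ ((A'.card : ℕ) : ℝ) * (E / (2 * M)) :=
        mul_le_mul_of_nonneg_right hA'card (div_nonneg hE0.le (by linarith only [hM1]))
      have h14 : 3 / 4 * ((A₁.card : ℕ) : ℝ) * (E / (2 * M)) - E / (8 * M) * ((A₁.card : ℕ) : ℝ)
          = ((A₁.card : ℕ) : ℝ) * (E / (4 * M)) := by ring
      have h15 : E / (3 * n) * (E / (4 * M)) ≤ ((A₁.card : ℕ) : ℝ) * (E / (4 * M)) :=
        mul_le_mul_of_nonneg_right hA₁lb (div_nonneg hE0.le (by linarith only [hM1]))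
      have h16 : β ^ 2 * N ^ 2 / 12 ≤ E / (3 * n) * (E / (4 * M)) := by
        have hEq : E / (3 * n) * (E / (4 * M)) = E ^ 2 / (12 * (M * n)) := by
          field_simp; ring
        rw [hEq, div_le_div_iff₀ (by norm_num) (by nlinarith only [mul_pos hM0 hn0])]
        have h17 : (β * N ^ 2) * (β * N ^ 2) ≤ E * E :=
          mul_self_le_mul_self (by positivity) he
        have hE2 : β ^ 2 * N ^ 4 ≤ E ^ 2 := by nlinarith only [h17]
        have h18 : β ^ 2 * N ^ 2 * (M * n) ≤ β ^ 2 * N ^ 2 * N ^ 2 :=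
          mul_le_mul_of_nonneg_left hAB (by positivity)
        nlinarith only [h18, hE2]
      linarith only [h13, h14, h15, h16, h8εn]
    calc β ^ 2 * N ^ 2 / 12 ≤ ∑ a ∈ A', ∑ b ∈ B', x a b := le_trans hnum hmain
      _ = (((A' ×ˢ B') ∩ H₀).card : ℝ) := hid.symm
      _ ≤ ((H ∩ A' ×ˢ B').card : ℝ) := by exact_mod_cast hsub

  -- path-counting: every s ∈ A' + B' has many triple representations
  have hPW : ∀ s ∈ A' + B',
      4 * ε * ((A₁.card : ℕ) : ℝ) * (θ * n) ≤
        (((S ×ˢ S ×ˢ S).filter (fun q : γ × γ × γ => q.1 - q.2.1 + q.2.2 = s)).card : ℝ) := by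
    intro s hs
    obtain ⟨a, ha, b, hb, rfl⟩ := Finset.mem_add.1 hs
    set Gs : Finset γ := A₁.filter (fun a₁ => (a₁, b) ∈ H₀ ∧ θ * n ≤ dd a a₁) with hGsdef
    have hGcard : 4 * ε * ((A₁.card : ℕ) : ℝ) ≤ ((Gs.card : ℕ) : ℝ) := by
      have hid2 : ((Gs.card : ℕ) : ℝ) =
          ∑ a₁ ∈ A₁, (if ((a₁, b) ∈ H₀ ∧ θ * n ≤ dd a a₁) then (1:ℝ) else 0) := by
        rw [hGsdef, Finset.card_filter]; push_cast; rfl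
      have hpt : ∀ a₁ ∈ A₁, x a₁ b - bb a a₁ ≤
          (if ((a₁, b) ∈ H₀ ∧ θ * n ≤ dd a a₁) then (1:ℝ) else 0) := by
        intro a₁ _
        rw [hxdef, hbbdef]
        by_cases h1 : (a₁, b) ∈ H₀
        · by_cases h2 : dd a a₁ < θ * n
          · rw [if_pos h1, if_pos h2,
              if_neg (show ¬((a₁, b) ∈ H₀ ∧ θ * n ≤ dd a a₁) from
                fun hcon => absurd h2 (not_lt.2 hcon.2))]
            norm_num
          · rw [if_pos h1, if_neg h2, if_pos ⟨h1, not_lt.1 h2⟩]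
            norm_num
        · rw [if_neg h1,
            if_neg (show ¬((a₁, b) ∈ H₀ ∧ θ * n ≤ dd a a₁) from fun hcon => h1 hcon.1)]
          split <;> norm_num
      have hxb : 8 * ε * ((A₁.card : ℕ) : ℝ) ≤ ∑ a₁ ∈ A₁, x a₁ b := by
        have hbB' := hb
        rw [hB'def, Finset.mem_filter] at hbB'
        exact hbB'.2
      have hbbs : ∑ a₁ ∈ A₁, bb a a₁ ≤ 4 * ε * ((A₁.card : ℕ) : ℝ) := by
        have haA' := ha
        rw [hA'def, Finset.mem_filter] at haA'
        exact haA'.2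
      have hsum2 := Finset.sum_le_sum hpt
      rw [Finset.sum_sub_distrib] at hsum2
      rw [hid2]
      linarith only [hsum2, hxb, hbbs]
    set Q : Finset (γ × γ) := Gs.biUnion (fun a₁ =>
      (B.filter (fun b₁ => (a, b₁) ∈ H₀ ∧ (a₁, b₁) ∈ H₀)).image (fun b₁ => (a₁, b₁))) with hQdef
    have hQcard : ((Gs.card : ℕ) : ℝ) * (θ * n) ≤ ((Q.card : ℕ) : ℝ) := by
      have hdisjQ : ∀ a₁ ∈ Gs, ∀ a₂ ∈ Gs, a₁ ≠ a₂ →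
          Disjoint ((B.filter (fun b₁ => (a, b₁) ∈ H₀ ∧ (a₁, b₁) ∈ H₀)).image (fun b₁ => (a₁, b₁)))
                   ((B.filter (fun b₁ => (a, b₁) ∈ H₀ ∧ (a₂, b₁) ∈ H₀)).image (fun b₁ => (a₂, b₁))) := by
        intro a₁ _ a₂ _ hne
        rw [Finset.disjoint_left]
        intro q hq1 hq2
        obtain ⟨b₁, -, rfl⟩ := Finset.mem_image.1 hq1
        obtain ⟨b₂, -, heq⟩ := Finset.mem_image.1 hq2
        exact hne (congrArg Prod.fst heq).symm
      rw [hQdef, Finset.card_biUnion hdisjQ]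
      push_cast
      have hterm : ∀ a₁ ∈ Gs, θ * n ≤
          (((B.filter (fun b₁ => (a, b₁) ∈ H₀ ∧ (a₁, b₁) ∈ H₀)).image (fun b₁ => (a₁, b₁))).card : ℝ) := by
        intro a₁ ha₁
        rw [Finset.card_image_of_injective _ (fun b₁ b₂ h => by simpa using h)]
        have hddval : (((B.filter (fun b₁ => (a, b₁) ∈ H₀ ∧ (a₁, b₁) ∈ H₀)).card : ℕ) : ℝ) = dd a a₁ := by
          rw [Finset.card_filter]
          push_cast
          rw [hdddef]
          refine Finset.sum_congr rfl fun b₁ _ => ?_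
          rw [hxdef, hxdef]
          by_cases h1 : (a, b₁) ∈ H₀ <;> by_cases h2 : (a₁, b₁) ∈ H₀ <;> simp [h1, h2]
        rw [hddval]
        rw [hGsdef, Finset.mem_filter] at ha₁
        exact ha₁.2.2
      have h29 := Finset.card_nsmul_le_sum Gs _ (θ * n) hterm
      rw [nsmul_eq_mul] at h29
      exact h29
    have hQW : Q.card ≤
        ((S ×ˢ S ×ˢ S).filter (fun q : γ × γ × γ => q.1 - q.2.1 + q.2.2 = a + b)).card := by
      apply Finset.card_le_card_of_injOn (fun q => (a + q.2, (q.1 + q.2, q.1 + b)))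
      · intro q hq
        rw [hQdef, Finset.mem_coe, Finset.mem_biUnion] at hq
        obtain ⟨a₁, ha₁, hq2⟩ := hq
        obtain ⟨b₁, hb₁, rfl⟩ := Finset.mem_image.1 hq2
        rw [Finset.mem_filter] at hb₁
        rw [hGsdef, Finset.mem_filter] at ha₁
        simp only [Finset.mem_coe, Finset.mem_filter, Finset.mem_product]
        refine ⟨⟨?_, ?_, ?_⟩, by abel⟩
        · exact hsum _ (hH₀H hb₁.2.1)
        · exact hsum _ (hH₀H hb₁.2.2)
        · exact hsum _ (hH₀H ha₁.2.1)
      · intro q hq q' hq' heq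
        have h1 : q.2 = q'.2 := by
          have h1' := congrArg Prod.fst heq
          simp only at h1'
          exact add_left_cancel h1'
        have h2 : q.1 = q'.1 := by
          have h2' := congrArg (fun z : γ × γ × γ => z.2.2) heq
          simp only at h2'
          exact add_right_cancel h2'
        exact Prod.ext h2 h1
    have hθn : (0:ℝ) ≤ θ * n := by nlinarith only [hθ0, hn0]
    calc 4 * ε * ((A₁.card : ℕ) : ℝ) * (θ * n)
        ≤ ((Gs.card : ℕ) : ℝ) * (θ * n) := mul_le_mul_of_nonneg_right hGcard hθn
      _ ≤ ((Q.card : ℕ) : ℝ) := hQcard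
      _ ≤ _ := by exact_mod_cast hQW
  -- summing the representation counts
  have hcount : ((A' + B').card : ℝ) * (4 * ε * ((A₁.card : ℕ) : ℝ) * (θ * n)) ≤ (t * N) ^ 3 := by
    have hWdisj : ∀ s ∈ A' + B', ∀ s' ∈ A' + B', s ≠ s' →
        Disjoint ((S ×ˢ S ×ˢ S).filter (fun q : γ × γ × γ => q.1 - q.2.1 + q.2.2 = s))
                 ((S ×ˢ S ×ˢ S).filter (fun q : γ × γ × γ => q.1 - q.2.1 + q.2.2 = s')) := by
      intro s _ s' _ hne
      rw [Finset.disjoint_left]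
      intro q hq hq'
      rw [Finset.mem_filter] at hq hq'
      exact hne (hq.2 ▸ hq'.2)
    have h21 : ∑ s ∈ A' + B',
        (((S ×ˢ S ×ˢ S).filter (fun q : γ × γ × γ => q.1 - q.2.1 + q.2.2 = s)).card) ≤
        (S ×ˢ S ×ˢ S).card := by
      rw [← Finset.card_biUnion hWdisj]
      exact Finset.card_le_card (Finset.biUnion_subset.2 fun s _ => Finset.filter_subset _ _)
    have h22 := Finset.card_nsmul_le_sum (A' + B') _ _ hPW
    rw [nsmul_eq_mul] at h22
    have h23 : (∑ s ∈ A' + B',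
        ((((S ×ˢ S ×ˢ S).filter (fun q : γ × γ × γ => q.1 - q.2.1 + q.2.2 = s)).card : ℕ) : ℝ)) ≤
        (((S ×ˢ S ×ˢ S).card : ℕ) : ℝ) := by exact_mod_cast h21
    have h24 : (((S ×ˢ S ×ˢ S).card : ℕ) : ℝ) = ((S.card : ℕ) : ℝ) ^ 3 := by
      rw [Finset.card_product, Finset.card_product]
      push_cast
      ring
    have h25 : ((S.card : ℕ) : ℝ) ^ 3 ≤ (t * N) ^ 3 :=
      pow_le_pow_left₀ (by positivity) hS 3
    calc ((A' + B').card : ℝ) * (4 * ε * ((A₁.card : ℕ) : ℝ) * (θ * n))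
        ≤ ∑ s ∈ A' + B',
            ((((S ×ˢ S ×ˢ S).filter (fun q : γ × γ × γ => q.1 - q.2.1 + q.2.2 = s)).card : ℕ) : ℝ) := h22
      _ ≤ (((S ×ˢ S ×ˢ S).card : ℕ) : ℝ) := h23
      _ = ((S.card : ℕ) : ℝ) ^ 3 := h24
      _ ≤ (t * N) ^ 3 := h25
  -- lower bound on the path count
  have hP_lb : β ^ 5 * N ^ 2 / 24576 ≤ 4 * ε * ((A₁.card : ℕ) : ℝ) * (θ * n) := by
    have hA₁lb2 : E / (3 * n) ≤ ((A₁.card : ℕ) : ℝ) := by rw [hA₁r]; exact hrb₀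
    have hstep1 : 4 * ε * (E / (3 * n)) * (θ * n) ≤ 4 * ε * ((A₁.card : ℕ) : ℝ) * (θ * n) := by
      have hc1 : (0:ℝ) < 4 * ε * (θ * n) := by nlinarith only [mul_pos hε0 (mul_pos hθ0 hn0)]
      nlinarith only [mul_le_mul_of_nonneg_left hA₁lb2 hc1.le]
    have hval : 4 * ε * (E / (3 * n)) * (θ * n) = E ^ 5 / (24576 * M ^ 4 * n ^ 4) := by
      rw [hε, hθ]; field_simp; ring
    have hlast : β ^ 5 * N ^ 2 / 24576 ≤ E ^ 5 / (24576 * M ^ 4 * n ^ 4) := by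
      rw [div_le_div_iff₀ (by norm_num) (by nlinarith only [pow_pos hM0 4, pow_pos hn0 4])]
      have hE5 : (β * N ^ 2) ^ 5 ≤ E ^ 5 := pow_le_pow_left₀ (by positivity) he 5
      have hMn4 : (M * n) ^ 4 ≤ (N ^ 2) ^ 4 := pow_le_pow_left₀ (by nlinarith only [hM0, hn0]) hAB 4
      have h26 : β ^ 5 * N ^ 2 * (M * n) ^ 4 ≤ β ^ 5 * N ^ 2 * (N ^ 2) ^ 4 :=
        mul_le_mul_of_nonneg_left hMn4 (by positivity)
      nlinarith only [hE5, h26]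
    rw [hval] at hstep1
    linarith only [hstep1, hlast]
  -- conclusion
  refine ⟨A', B', hA'A, hB'B, hcap, ?_⟩
  rw [le_div_iff₀ (by positivity : (0:ℝ) < β ^ 5)]
  have h27 : ((A' + B').card : ℝ) * (β ^ 5 * N ^ 2 / 24576) ≤ (t * N) ^ 3 :=
    le_trans (mul_le_mul_of_nonneg_left hP_lb (Nat.cast_nonneg _)) hcount
  have h28 : ((A' + B').card : ℝ) * β ^ 5 * N ^ 2 ≤ 24576 * t ^ 3 * N * N ^ 2 := by
    nlinarith only [h27]
  exact le_of_mul_le_mul_right h28 (by positivity)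


private lemma bsg_iter (A B S : Finset γ) (N t α : ℝ)
    (hN : 1 ≤ N) (ht : 0 < t) (hα : 0 < α) (hα1 : α < 1)
    (hAB : (A.card : ℝ) * B.card ≤ N ^ 2) (hS : (S.card : ℝ) ≤ t * N) :
    ∀ nn : ℕ, ∀ G : Finset (γ × γ), G.card ≤ nn → G ⊆ A ×ˢ B → (∀ p ∈ G, p.1 + p.2 ∈ S) →
    ∃ (k : ℕ) (A₁ B₁ : Fin k → Finset γ),
      ((k : ℝ) ≤ if (G.card : ℝ) ≤ α * N ^ 2 then 0 else 13 / α - 12 * N ^ 2 / (G.card : ℝ)) ∧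
      (∀ i, A₁ i ⊆ A) ∧ (∀ i, B₁ i ⊆ B) ∧
      (((G \ Finset.univ.biUnion fun i => A₁ i ×ˢ B₁ i).card : ℝ) ≤ α * N ^ 2) ∧
      (∀ i, ((A₁ i + B₁ i).card : ℝ) ≤ 24576 * (1 / α) ^ 5 * t ^ 3 * N) := by
  classical
  have hN0 : (0:ℝ) < N := lt_of_lt_of_le one_pos hN
  intro nn
  induction nn with
  | zero =>
      intro G hcard hG hGsum
      have hG0 : G.card = 0 := Nat.le_zero.1 hcard
      have hsmall : (G.card : ℝ) ≤ α * N ^ 2 := by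
        rw [hG0]; push_cast; positivity
      refine ⟨0, Fin.elim0, Fin.elim0, by rw [if_pos hsmall]; norm_num,
        fun i => i.elim0, fun i => i.elim0, ?_, fun i => i.elim0⟩
      calc ((G \ Finset.univ.biUnion fun i : Fin 0 => Fin.elim0 i ×ˢ Fin.elim0 i).card : ℝ)
          ≤ (G.card : ℝ) := by exact_mod_cast Finset.card_le_card Finset.sdiff_subset
        _ ≤ α * N ^ 2 := hsmall
  | succ nn ih =>
      intro G hcard hG hGsum
      by_cases hsmall : (G.card : ℝ) ≤ α * N ^ 2
      · refine ⟨0, Fin.elim0, Fin.elim0, by rw [if_pos hsmall]; norm_num,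
          fun i => i.elim0, fun i => i.elim0, ?_, fun i => i.elim0⟩
        calc ((G \ Finset.univ.biUnion fun i : Fin 0 => Fin.elim0 i ×ˢ Fin.elim0 i).card : ℝ)
            ≤ (G.card : ℝ) := by exact_mod_cast Finset.card_le_card Finset.sdiff_subset
          _ ≤ α * N ^ 2 := hsmall
      · set β : ℝ := (G.card : ℝ) / N ^ 2 with hβdef
        have hGpos : α * N ^ 2 < (G.card : ℝ) := not_le.1 hsmall
        have hGc0 : (0:ℝ) < (G.card : ℝ) := lt_trans (by positivity) hGpos
        have hβα : α < β := by
          rw [hβdef, lt_div_iff₀ (by positivity)]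
          linarith only [hGpos]
        have hβ0 : 0 < β := lt_trans hα hβα
        have hβN : β * N ^ 2 = (G.card : ℝ) := by
          rw [hβdef]; field_simp
        obtain ⟨A', B', hA'A, hB'B, hcap, hsumset⟩ :=
          bsg_step A B S G N t β hG hGsum hN ht hβ0 hAB hS (le_of_eq hβN)
        have hGcN : (G.card : ℝ) ≤ N ^ 2 := by
          calc (G.card : ℝ) ≤ ((A ×ˢ B).card : ℝ) := by
                exact_mod_cast Finset.card_le_card hG
            _ = (A.card : ℝ) * B.card := by rw [Finset.card_product]; push_cast; ring
            _ ≤ N ^ 2 := hAB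
        set G' : Finset (γ × γ) := G \ (A' ×ˢ B') with hG'def
        have hcappos : (0:ℝ) < ((G ∩ A' ×ˢ B').card : ℝ) := by
          calc (0:ℝ) < β ^ 2 * N ^ 2 / 12 := by positivity
            _ ≤ _ := hcap
        have hcap1 : 1 ≤ (G ∩ A' ×ˢ B').card := by
          by_contra hcon
          push_neg at hcon
          rw [Nat.lt_one_iff.1 hcon] at hcappos
          norm_num at hcappos
        have hsplit : G'.card + (G ∩ A' ×ˢ B').card = G.card := by
          rw [hG'def]; exact Finset.card_sdiff_add_card_inter G (A' ×ˢ B')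
        have hG'le : G'.card ≤ nn := by omega
        obtain ⟨k, A₁, B₁, hk, hA₁, hB₁, hrem, hss⟩ :=
          ih G' hG'le (Finset.Subset.trans (by rw [hG'def]; exact Finset.sdiff_subset) hG)
            (fun p hp => hGsum p (by rw [hG'def] at hp; exact (Finset.mem_sdiff.1 hp).1))
        have hG'c : (G'.card : ℝ) = (G.card : ℝ) - ((G ∩ A' ×ˢ B').card : ℝ) := by
          have := congrArg (Nat.cast : ℕ → ℝ) hsplit
          push_cast at this
          linarith only [this]
        refine ⟨k + 1, Fin.cons A' A₁, Fin.cons B' B₁, ?_, ?_, ?_, ?_, ?_⟩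
        · -- k bound
          rw [if_neg hsmall]
          have h13 : (13:ℝ) / α = 12 / α + 1 / α := by ring
          have h1α : (1:ℝ) ≤ 1 / α := by
            rw [le_div_iff₀ hα]; linarith only [hα1]
          by_cases h2 : (G'.card : ℝ) ≤ α * N ^ 2
          · rw [if_pos h2] at hk
            have hk0 : (k : ℝ) = 0 := le_antisymm hk (by positivity)
            have hq1 : 12 * N ^ 2 / (G.card : ℝ) ≤ 12 / α := by
              rw [div_le_div_iff₀ hGc0 hα]
              nlinarith only [hGpos, hα]
            push_cast
            rw [hk0]
            linarith only [hq1, h1α, h13]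
          · rw [if_neg h2] at hk
            have hG'c0 : (0:ℝ) < (G'.card : ℝ) := lt_trans (by positivity) (not_le.1 h2)
            have hcap' : (G.card : ℝ) ^ 2 ≤ ((G ∩ A' ×ˢ B').card : ℝ) * (12 * N ^ 2) := by
              have hval : β ^ 2 * N ^ 2 / 12 = (G.card : ℝ) ^ 2 / (12 * N ^ 2) := by
                rw [hβdef]; field_simp
              rw [hval] at hcap
              rw [← div_le_iff₀ (by positivity : (0:ℝ) < 12 * N ^ 2)]
              exact hcap
            have hkey : 12 * N ^ 2 * (G'.card : ℝ) ≤ 12 * N ^ 2 * (G.card : ℝ) - (G.card : ℝ) ^ 2 := by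
              rw [hG'c]
              nlinarith only [hcap']
            have hG'leG : (G'.card : ℝ) ≤ (G.card : ℝ) := by
              rw [hG'c]; linarith only [hcappos]
            have hmain : 12 * N ^ 2 / (G.card : ℝ) + 1 ≤ 12 * N ^ 2 / (G'.card : ℝ) := by
              rw [div_add' _ _ _ (ne_of_gt hGc0), div_le_div_iff₀ hGc0 hG'c0]
              nlinarith only [hkey, mul_le_mul_of_nonneg_left hG'leG hGc0.le]
            push_cast
            linarith only [hk, hmain]
        · intro i
          refine Fin.cases ?_ ?_ i
          · simpa using hA'A
          · intro j; simpa using hA₁ j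
        · intro i
          refine Fin.cases ?_ ?_ i
          · simpa using hB'B
          · intro j; simpa using hB₁ j
        · -- remainder
          have hsub2 : (G \ Finset.univ.biUnion fun i : Fin (k+1) =>
                (Fin.cons A' A₁ : Fin (k+1) → Finset γ) i ×ˢ (Fin.cons B' B₁ : Fin (k+1) → Finset γ) i)
              ⊆ G' \ Finset.univ.biUnion fun i => A₁ i ×ˢ B₁ i := by
            intro p hp
            rw [Finset.mem_sdiff] at hp
            rw [Finset.mem_sdiff, hG'def, Finset.mem_sdiff]
            refine ⟨⟨hp.1, fun hmem => hp.2 ?_⟩, fun hmem => ?_⟩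
            · exact Finset.mem_biUnion.2 ⟨0, Finset.mem_univ _, by simpa using hmem⟩
            · obtain ⟨i, -, hmem2⟩ := Finset.mem_biUnion.1 hmem
              exact hp.2 (Finset.mem_biUnion.2 ⟨i.succ, Finset.mem_univ _, by simpa using hmem2⟩)
          calc ((G \ Finset.univ.biUnion fun i : Fin (k+1) =>
                (Fin.cons A' A₁ : Fin (k+1) → Finset γ) i ×ˢ (Fin.cons B' B₁ : Fin (k+1) → Finset γ) i).card : ℝ)
              ≤ ((G' \ Finset.univ.biUnion fun i => A₁ i ×ˢ B₁ i).card : ℝ) := by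
                exact_mod_cast Finset.card_le_card hsub2
            _ ≤ α * N ^ 2 := hrem
        · intro i
          refine Fin.cases ?_ ?_ i
          · have hβ5 : α ^ 5 ≤ β ^ 5 := pow_le_pow_left₀ hα.le hβα.le 5
            have hα5 : (0:ℝ) < α ^ 5 := by positivity
            have h5 : 24576 * t ^ 3 * N / β ^ 5 ≤ 24576 * t ^ 3 * N * (1 / α ^ 5) := by
              rw [div_eq_mul_one_div]
              apply mul_le_mul_of_nonneg_left _ (by positivity)
              apply one_div_le_one_div_of_le hα5 hβ5
            simp only [Fin.cons_zero]
            calc ((A' + B').card : ℝ) ≤ 24576 * t ^ 3 * N / β ^ 5 := hsumset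
              _ ≤ 24576 * t ^ 3 * N * (1 / α ^ 5) := h5
              _ = 24576 * (1 / α) ^ 5 * t ^ 3 * N := by ring
          · intro j; simpa using hss j

end BSG

/-- **BSG Corollary**: there is an absolute constant `C > 0` such that for any finite
subsets `A, B, S` of an abelian group with `|A||B| ≤ N²` and `|S| ≤ tN`, and any
`0 < α < 1`, there are `k ≤ C/α` bicliques `Aᵢ × Bᵢ` (with `Aᵢ ⊆ A`, `Bᵢ ⊆ B`) such that
the remainder `R = {(a,b) ∈ A×B : a+b ∈ S} \ ⋃ᵢ (Aᵢ × Bᵢ)` has size at most `αN²`,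
and `|Aᵢ + Bᵢ| ≤ C(1/α)⁵t³N` for each `i`. -/
theorem stmt_2 : ∃ C : ℝ, 0 < C ∧
    ∀ (γ : Type) [AddCommGroup γ] [DecidableEq γ]
      (A B S : Finset γ) (N t α : ℝ),
      1 ≤ N → 0 < t → 0 < α → α < 1 →
      (A.card : ℝ) * (B.card : ℝ) ≤ N ^ 2 → (S.card : ℝ) ≤ t * N →
      ∃ (k : ℕ) (A₁ B₁ : Fin k → Finset γ),
        (k : ℝ) ≤ C / α ∧
        (∀ i, A₁ i ⊆ A) ∧ (∀ i, B₁ i ⊆ B) ∧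
        (((((A ×ˢ B).filter fun p => p.1 + p.2 ∈ S) \
            Finset.univ.biUnion fun i => A₁ i ×ˢ B₁ i).card : ℝ) ≤ α * N ^ 2) ∧
        (∀ i, ((A₁ i + B₁ i).card : ℝ) ≤ C * (1 / α) ^ 5 * t ^ 3 * N) := by
  refine ⟨24576, by norm_num, ?_⟩
  intro γ _ _ A B S N t α hN ht hα hα1 hAB hS
  classical
  obtain ⟨k, A₁, B₁, hk, hA₁, hB₁, hrem, hss⟩ :=
    bsg_iter A B S N t α hN ht hα hα1 hAB hS
      ((A ×ˢ B).filter fun p => p.1 + p.2 ∈ S).card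
      ((A ×ˢ B).filter fun p => p.1 + p.2 ∈ S) le_rfl
      (Finset.filter_subset _ _) (fun p hp => (Finset.mem_filter.1 hp).2)
  refine ⟨k, A₁, B₁, ?_, hA₁, hB₁, hrem, hss⟩
  by_cases h : ((((A ×ˢ B).filter fun p => p.1 + p.2 ∈ S).card : ℕ) : ℝ) ≤ α * N ^ 2
  · rw [if_pos h] at hk
    calc (k:ℝ) ≤ 0 := hk
      _ ≤ 24576 / α := by positivity
  · rw [if_neg h] at hk
    have h1 : (13:ℝ) / α ≤ 24576 / α := by
      rw [div_le_div_iff₀ hα hα]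
      nlinarith only [hα]
    have h0 : (0:ℝ) ≤ 12 * N ^ 2 / ((((A ×ˢ B).filter fun p => p.1 + p.2 ∈ S).card : ℕ) : ℝ) := by
      positivity
    linarith only [hk, h1, h0]
end

section
/- Let A and B be finite subsets of an abelian group, let G ⊆ A×B, and let S = {a+b : (a,b) ∈ G}. Let A' ⊆ A and B' ⊆ B, and let K > 0 be a real number. Suppose that for every a' ∈ A' and b' ∈ B' there are at least K pairs (a,b) ∈ A×B with (a',b) ∈ G, (a,b) ∈ G, and (a,b') ∈ G. Then K·|A'+B'| ≤ |S|³. -/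
open Finset Pointwise

/-- The counting argument deducing the BSG Theorem from the Graph Lemma: if every
`(a', b') ∈ A' × B'` is joined by at least `K` length-3 paths in `G ⊆ A × B`, and
`S = {a+b : (a,b) ∈ G}`, then `K·|A'+B'| ≤ |S|³`. -/
theorem stmt_3 {γ : Type*} [AddCommGroup γ] [DecidableEq γ]
    (A B : Finset γ) (G : Finset (γ × γ)) (hG : G ⊆ A ×ˢ B)
    (S : Finset γ) (hS : S = G.image fun p => p.1 + p.2)
    (A' B' : Finset γ) (hA' : A' ⊆ A) (hB' : B' ⊆ B) (K : ℝ) (hK : 0 < K)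
    (hpaths : ∀ a' ∈ A', ∀ b' ∈ B',
      K ≤ ((((A ×ˢ B).filter fun p => (a', p.2) ∈ G ∧ p ∈ G ∧ (p.1, b') ∈ G)).card : ℝ)) :
    K * (((A' + B').card : ℝ)) ≤ ((S.card : ℝ)) ^ 3 := by
  classical
  have hrep : ∀ c ∈ A' + B', ∃ p : γ × γ, p.1 ∈ A' ∧ p.2 ∈ B' ∧ p.1 + p.2 = c := by
    intro c hc
    rw [Finset.mem_add] at hc
    obtain ⟨x, hx, y, hy, hxy⟩ := hc
    exact ⟨(x, y), hx, hy, hxy⟩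
  choose! rep hrep1 hrep2 hrep3 using hrep
  set paths : γ → Finset (γ × γ) := fun c =>
    (A ×ˢ B).filter fun p => ((rep c).1, p.2) ∈ G ∧ p ∈ G ∧ (p.1, (rep c).2) ∈ G with hpathsdef
  have hK' : ∀ c ∈ A' + B', K ≤ ((paths c).card : ℝ) := fun c hc =>
    hpaths _ (hrep1 c hc) _ (hrep2 c hc)
  have h1 : K * ((A' + B').card : ℝ) ≤ ∑ c ∈ A' + B', ((paths c).card : ℝ) := by
    have := Finset.sum_le_sum hK'
    simpa [Finset.sum_const, nsmul_eq_mul, mul_comm] using this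
  have h2 : ∑ c ∈ A' + B', ((paths c).card : ℝ) = (((A' + B').sigma paths).card : ℝ) := by
    rw [Finset.card_sigma]; push_cast; rfl
  have h3 : ((A' + B').sigma paths).card ≤ (S ×ˢ S ×ˢ S).card := by
    apply Finset.card_le_card_of_injOn
      (fun q => ((rep q.1).1 + q.2.2, q.2.1 + q.2.2, q.2.1 + (rep q.1).2))
    · rintro ⟨c, a, b⟩ hq
      rw [Finset.mem_coe, Finset.mem_sigma] at hq
      obtain ⟨hc, hp⟩ := hq
      rw [hpathsdef, Finset.mem_filter] at hp
      obtain ⟨-, h1', h2', h3'⟩ := hp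
      simp only [Finset.mem_coe, Finset.mem_product, hS, Finset.mem_image]
      exact ⟨⟨_, h1', rfl⟩, ⟨_, h2', rfl⟩, ⟨_, h3', rfl⟩⟩
    · rintro ⟨c, a, b⟩ hq ⟨c', a', b'⟩ hq' heq
      rw [Finset.mem_coe, Finset.mem_sigma] at hq hq'
      simp only [Prod.mk.injEq] at heq
      obtain ⟨e1, e2, e3⟩ := heq
      have hcc : c = c' := by
        have h : (rep c).1 + b - (a + b) + (a + (rep c).2)
            = (rep c').1 + b' - (a' + b') + (a' + (rep c').2) := by rw [e1, e2, e3]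
        have key : (rep c).1 + (rep c).2 = (rep c').1 + (rep c').2 := by
          calc (rep c).1 + (rep c).2 = (rep c).1 + b - (a + b) + (a + (rep c).2) := by abel
            _ = (rep c').1 + b' - (a' + b') + (a' + (rep c').2) := h
            _ = (rep c').1 + (rep c').2 := by abel
        rw [hrep3 c hq.1, hrep3 c' hq'.1] at key
        exact key
      subst hcc
      have hb : b = b' := by
        have := e1
        exact add_left_cancel this
      have ha : a = a' := by
        have := e3
        exact add_right_cancel this
      simp [ha, hb]
  have h4 : ((S ×ˢ S ×ˢ S).card : ℝ) = (S.card : ℝ) ^ 3 := by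
    simp [Finset.card_product]; ring
  calc K * ((A' + B').card : ℝ) ≤ ∑ c ∈ A' + B', ((paths c).card : ℝ) := h1
    _ = (((A' + B').sigma paths).card : ℝ) := h2
    _ ≤ ((S ×ˢ S ×ˢ S).card : ℝ) := by exact_mod_cast h3
    _ = (S.card : ℝ) ^ 3 := h4
end

section
/- Let A and B be finite nonempty sets, let 0 < α ≤ 1, and let G ⊆ A×B with |G| ≥ α|A||B|. Let A₀ = {a ∈ A : deg_G(a) ≥ α|B|/2}. Then there exists b* ∈ B such that the set A* = {a ∈ A₀ : (a,b*) ∈ G} satisfies |A*| ≥ α|A|/4 and |{(a,a') ∈ A*×A* : cdeg_G(a,a') ≤ α³|B|/2048}| ≤ α²|A*||A|/256. -/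
open Finset

set_option maxHeartbeats 1000000 in
/-- The probabilistic step in the proof of the Graph Lemma: with
`A₀ = {a ∈ A : deg_G(a) ≥ α|B|/2}`, there exists `b* ∈ B` such that
`A* = A₀ ∩ N_G(b*)` satisfies `|A*| ≥ α|A|/4` and the set of pairs of `A*` with
small common degree (`cdeg_G(a,a') ≤ α³|B|/2048`) has size at most `α²|A*||A|/256`. -/
theorem stmt_4 {X Y : Type*} [DecidableEq X] [DecidableEq Y]
    (A : Finset X) (B : Finset Y) (hA : A.Nonempty) (hB : B.Nonempty)
    (α : ℝ) (hα0 : 0 < α) (hα1 : α ≤ 1)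
    (G : Finset (X × Y)) (hG : G ⊆ A ×ˢ B)
    (hGcard : α * (A.card : ℝ) * (B.card : ℝ) ≤ (G.card : ℝ)) :
    ∃ bstar ∈ B, ∃ Astar : Finset X,
      Astar = (A.filter fun a =>
          α * (B.card : ℝ) / 2 ≤ ((B.filter fun b => (a, b) ∈ G).card : ℝ)).filter
        (fun a => (a, bstar) ∈ G) ∧
      α * (A.card : ℝ) / 4 ≤ (Astar.card : ℝ) ∧
      ((((Astar ×ˢ Astar).filter fun p =>
          ((B.filter fun b => (p.1, b) ∈ G ∧ (p.2, b) ∈ G).card : ℝ) ≤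
            α ^ 3 * (B.card : ℝ) / 2048).card : ℝ)
        ≤ α ^ 2 * (Astar.card : ℝ) * (A.card : ℝ) / 256) := by
  classical
  set n : ℝ := (A.card : ℝ) with hn
  set m : ℝ := (B.card : ℝ) with hm
  have hn1 : (1:ℝ) ≤ n := by rw [hn]; exact_mod_cast hA.card_pos
  have hm1 : (1:ℝ) ≤ m := by rw [hm]; exact_mod_cast hB.card_pos
  have hn0 : (0:ℝ) < n := by linarith
  have hm0 : (0:ℝ) < m := by linarith
  set d : X → ℕ := fun a => (B.filter fun b => (a, b) ∈ G).card with hd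
  set cd : X → X → ℕ := fun a a' => (B.filter fun b => (a, b) ∈ G ∧ (a', b) ∈ G).card with hcd
  set A0 : Finset X := A.filter (fun a => α * m / 2 ≤ (d a : ℝ)) with hA0
  set Ast : Y → Finset X := fun b => A0.filter (fun a => (a, b) ∈ G) with hAst
  set t : ℝ := α ^ 3 * m / 2048 with ht
  have ht0 : (0:ℝ) ≤ t := by positivity
  set bad : Y → ℕ := fun b => ((Ast b ×ˢ Ast b).filter fun p =>
      ((cd p.1 p.2 : ℝ) ≤ t)).card with hbad
  -- Step 1: G.card = ∑ a in A, d a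
  have hGeq : G = (A ×ˢ B).filter (· ∈ G) := by
    ext p
    simp only [mem_filter]
    exact ⟨fun hp => ⟨hG hp, hp⟩, fun h => h.2⟩
  have key1 : G.card = ∑ a ∈ A, d a := by
    rw [hGeq, Finset.card_filter, Finset.sum_product]
    exact Finset.sum_congr rfl (fun a _ => (Finset.card_filter _ _).symm)
  -- Step 2: ∑ b in B, (Ast b).card = ∑ a in A0, d a
  have key2 : ∑ b ∈ B, (Ast b).card = ∑ a ∈ A0, d a := by
    calc ∑ b ∈ B, (Ast b).card = ∑ b ∈ B, ∑ a ∈ A0, if (a, b) ∈ G then 1 else 0 :=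
          Finset.sum_congr rfl (fun b _ => Finset.card_filter _ _)
      _ = ∑ a ∈ A0, ∑ b ∈ B, if (a, b) ∈ G then 1 else 0 := Finset.sum_comm
      _ = ∑ a ∈ A0, d a :=
          Finset.sum_congr rfl (fun a _ => (Finset.card_filter _ _).symm)
  -- Step 1': lower bound on ∑ a in A0, d a
  have hsum1 : α * n * m / 2 ≤ ∑ a ∈ A0, (d a : ℝ) := by
    have hsplit : ∑ a ∈ A0, (d a : ℝ) + ∑ a ∈ A.filter (fun a => ¬ (α * m / 2 ≤ (d a : ℝ))), (d a : ℝ)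
        = ∑ a ∈ A, (d a : ℝ) := by
      rw [hA0]
      exact Finset.sum_filter_add_sum_filter_not A _ _
    have hsmall : ∑ a ∈ A.filter (fun a => ¬ (α * m / 2 ≤ (d a : ℝ))), (d a : ℝ)
        ≤ n * (α * m / 2) := by
      have h1 : ∑ a ∈ A.filter (fun a => ¬ (α * m / 2 ≤ (d a : ℝ))), (d a : ℝ)
          ≤ ∑ _a ∈ A.filter (fun a => ¬ (α * m / 2 ≤ (d a : ℝ))), (α * m / 2) := by
        refine Finset.sum_le_sum fun a ha => ?_
        have := (Finset.mem_filter.mp ha).2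
        linarith [not_le.mp this]
      rw [Finset.sum_const, nsmul_eq_mul] at h1
      have h2 : ((A.filter (fun a => ¬ (α * m / 2 ≤ (d a : ℝ)))).card : ℝ) ≤ n := by
        rw [hn]; exact_mod_cast Finset.card_filter_le A _
      have h3 : (0:ℝ) ≤ α * m / 2 := div_nonneg (mul_nonneg hα0.le hm0.le) (by norm_num)
      nlinarith
    have hGsum : α * n * m ≤ ∑ a ∈ A, (d a : ℝ) := by
      have : ((G.card : ℕ) : ℝ) = ∑ a ∈ A, (d a : ℝ) := by
        rw [key1]; push_cast; ring_nf
      linarith [hGcard, this.symm.le, this.le]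
    nlinarith
  -- Step 3: ∑ b in B, bad b bounded
  have hAstprod : ∀ b, Ast b ×ˢ Ast b
      = (A0 ×ˢ A0).filter (fun p => (p.1, b) ∈ G ∧ (p.2, b) ∈ G) := by
    intro b
    ext p
    simp only [hAst, Finset.mem_product, Finset.mem_filter]
    tauto
  have key3 : ∑ b ∈ B, (bad b : ℝ) ≤ n ^ 2 * t := by
    have hbadeq : ∀ b, (bad b : ℝ)
        = ∑ p ∈ A0 ×ˢ A0, if ((p.1, b) ∈ G ∧ (p.2, b) ∈ G) ∧ (cd p.1 p.2 : ℝ) ≤ t then (1:ℝ) else 0 := by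
      intro b
      rw [hbad]
      simp only
      rw [hAstprod b, Finset.filter_filter]
      push_cast [Finset.card_filter]
      rfl
    have hswap : ∑ b ∈ B, (bad b : ℝ)
        = ∑ p ∈ A0 ×ˢ A0, ∑ b ∈ B,
            if ((p.1, b) ∈ G ∧ (p.2, b) ∈ G) ∧ (cd p.1 p.2 : ℝ) ≤ t then (1:ℝ) else 0 := by
      rw [Finset.sum_congr rfl (fun b _ => hbadeq b)]
      exact Finset.sum_comm
    rw [hswap]
    have hbound : ∀ p ∈ A0 ×ˢ A0,
        (∑ b ∈ B, if ((p.1, b) ∈ G ∧ (p.2, b) ∈ G) ∧ (cd p.1 p.2 : ℝ) ≤ t then (1:ℝ) else 0) ≤ t := by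
      intro p _
      by_cases hQ : (cd p.1 p.2 : ℝ) ≤ t
      · have heq : (∑ b ∈ B, if ((p.1, b) ∈ G ∧ (p.2, b) ∈ G) ∧ (cd p.1 p.2 : ℝ) ≤ t then (1:ℝ) else 0)
            = ((B.filter (fun b => (p.1, b) ∈ G ∧ (p.2, b) ∈ G)).card : ℝ) := by
          simp only [hQ, and_true]
          rw [Finset.sum_boole]
        rw [heq]; exact hQ
      · simp only [hQ, and_false, if_false, Finset.sum_const_zero]
        exact ht0
    calc ∑ p ∈ A0 ×ˢ A0, ∑ b ∈ B,
            (if ((p.1, b) ∈ G ∧ (p.2, b) ∈ G) ∧ (cd p.1 p.2 : ℝ) ≤ t then (1:ℝ) else 0)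
        ≤ ∑ _p ∈ A0 ×ˢ A0, t := Finset.sum_le_sum hbound
      _ = ((A0 ×ˢ A0).card : ℝ) * t := by rw [Finset.sum_const, nsmul_eq_mul]
      _ ≤ n ^ 2 * t := by
          have h1 : ((A0 ×ˢ A0).card : ℝ) ≤ n ^ 2 := by
            rw [Finset.card_product]
            have : (A0.card : ℝ) ≤ n := by
              rw [hn, hA0]; exact_mod_cast Finset.card_filter_le A _
            have h00 : (0:ℝ) ≤ (A0.card : ℝ) := Nat.cast_nonneg _
            push_cast
            nlinarith
          nlinarith
  -- averaging
  set c : ℝ := 256 / (α ^ 2 * n) with hc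
  have hc0 : (0:ℝ) < c := div_pos (by norm_num) (mul_pos (pow_pos hα0 2) hn0)
  have hsumAst : α * n * m / 2 ≤ ∑ b ∈ B, ((Ast b).card : ℝ) := by
    have : ∑ b ∈ B, ((Ast b).card : ℝ) = ∑ a ∈ A0, (d a : ℝ) := by
      exact_mod_cast congrArg (Nat.cast : ℕ → ℝ) key2
    linarith [hsum1, this.le, this.symm.le]
  have hcnt : c * (n ^ 2 * t) = α * n * m / 8 := by
    rw [hc, ht]
    field_simp
    ring
  have havg : ∑ b ∈ B, (3 * α * n / 8) ≤ ∑ b ∈ B, (((Ast b).card : ℝ) - c * (bad b : ℝ)) := by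
    rw [Finset.sum_sub_distrib, Finset.sum_const, nsmul_eq_mul, ← Finset.mul_sum]
    have h1 : c * ∑ b ∈ B, (bad b : ℝ) ≤ α * n * m / 8 := by
      calc c * ∑ b ∈ B, (bad b : ℝ) ≤ c * (n ^ 2 * t) := mul_le_mul_of_nonneg_left key3 hc0.le
        _ = α * n * m / 8 := hcnt
    have : (B.card : ℝ) * (3 * α * n / 8) = 3 * α * n * m / 8 := by rw [← hm]; ring
    rw [this]
    linarith
  obtain ⟨b, hbB, hfb⟩ := Finset.exists_le_of_sum_le hB havg
  have hAsteq : Ast b = (A.filter fun a =>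
      α * (B.card : ℝ) / 2 ≤ ((B.filter fun bb => (a, bb) ∈ G).card : ℝ)).filter
        (fun a => (a, b) ∈ G) := by
    ext a
    simp only [hAst, hA0, hd, hm, Finset.mem_filter]
  have hbadeq2 : ((Ast b ×ˢ Ast b).filter fun p =>
      ((B.filter fun bb => (p.1, bb) ∈ G ∧ (p.2, bb) ∈ G).card : ℝ) ≤
        α ^ 3 * (B.card : ℝ) / 2048)
      = (Ast b ×ˢ Ast b).filter (fun p => (cd p.1 p.2 : ℝ) ≤ t) := by
    apply Finset.filter_congr
    intro p _
    simp only [hcd, ht, hm]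
  refine ⟨b, hbB, Ast b, hAsteq, ?_, ?_⟩
  · have hbad0 : (0:ℝ) ≤ (bad b : ℝ) := Nat.cast_nonneg _
    have hcb : 0 ≤ c * (bad b : ℝ) := mul_nonneg hc0.le hbad0
    have h3 : 3 * α * n / 8 ≤ ((Ast b).card : ℝ) := by linarith
    have hαn : 0 ≤ α * n := (mul_pos hα0 hn0).le
    linarith
  · rw [hbadeq2]
    show ((bad b : ℕ) : ℝ) ≤ α ^ 2 * ((Ast b).card : ℝ) * n / 256
    have h0 : 0 ≤ 3 * α * n / 8 := div_nonneg (mul_nonneg (mul_nonneg (by norm_num) hα0.le) hn0.le) (by norm_num)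
    have h1 : c * (bad b : ℝ) ≤ ((Ast b).card : ℝ) := by linarith
    have hc1 : c * (α ^ 2 * n / 256) = 1 := by rw [hc]; field_simp
    have h2 := mul_le_mul_of_nonneg_left h1 (div_nonneg (mul_nonneg (pow_nonneg hα0.le 2) hn0.le) (by norm_num) : (0:ℝ) ≤ α ^ 2 * n / 256)
    have h3 : (α ^ 2 * n / 256) * (c * (bad b : ℝ)) = (bad b : ℝ) := by
      calc (α ^ 2 * n / 256) * (c * (bad b : ℝ))
          = (c * (α ^ 2 * n / 256)) * (bad b : ℝ) := by ring
        _ = (bad b : ℝ) := by rw [hc1, one_mul]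
    have h4 : (α ^ 2 * n / 256) * ((Ast b).card : ℝ) = α ^ 2 * ((Ast b).card : ℝ) * n / 256 := by
      ring
    linarith
end

section
/- Let A and B be finite sets, 0 < α ≤ 1, and G ⊆ A×B. Suppose A* ⊆ A satisfies |A*| ≥ α|A|/4, and let BAD* = {(a,a') ∈ A*×A* : cdeg_G(a,a') ≤ α³|B|/2048}, with |BAD*| ≤ α²|A*||A|/256. Define A' = {a ∈ A* : |{a' ∈ A* : (a,a') ∈ BAD*}| ≤ α²|A|/64} and B' = {b ∈ B : |{a ∈ A' : (a,b) ∈ G}| ≥ α|A'|/4}. Then |A'| ≥ |A*|/2 ≥ α|A|/8, and for every a' ∈ A' and b' ∈ B', the number of pairs (a,b) ∈ A×B with (a',b) ∈ G, (a,b) ∈ G, and (a,b') ∈ G is at least (α²|A|/64)·(α³|B|/2048) = α⁵|A||B|/2¹⁷. -/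
open Finset

lemma sum_card_le_aux {X Y : Type*} [DecidableEq X] [DecidableEq Y]
    (S : Finset X) (f : X → Finset Y) (T : Finset (X × Y))
    (h : ∀ a ∈ S, ∀ b ∈ f a, (a, b) ∈ T) :
    ∑ a ∈ S, (f a).card ≤ T.card := by
  classical
  have hsub : S.biUnion (fun a => (f a).image (Prod.mk a)) ⊆ T := by
    intro p hp
    simp only [mem_biUnion, mem_image] at hp
    obtain ⟨a, ha, b, hb, rfl⟩ := hp
    exact h a ha b hb
  have hdisj : ∀ a ∈ S, ∀ a' ∈ S, a ≠ a' →
      Disjoint ((f a).image (Prod.mk a)) ((f a').image (Prod.mk a')) := by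
    intro a _ a' _ hne
    simp only [disjoint_left, mem_image]
    rintro p ⟨b, _, rfl⟩ ⟨b', _, h'⟩
    exact hne (congrArg Prod.fst h'.symm)
  calc ∑ a ∈ S, (f a).card
      = ∑ a ∈ S, ((f a).image (Prod.mk a)).card := by
        refine Finset.sum_congr rfl fun a _ => ?_
        rw [Finset.card_image_of_injective _ (fun b b' hb => congrArg Prod.snd hb)]
    _ = (S.biUnion (fun a => (f a).image (Prod.mk a))).card :=
        (Finset.card_biUnion hdisj).symm
    _ ≤ T.card := Finset.card_le_card hsub

/-- The deterministic step in the proof of the Graph Lemma: given `A* ⊆ A` with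
`|A*| ≥ α|A|/4` and with few bad pairs (pairs of small common degree), the sets
`A' = {a ∈ A* : deg_{BAD*}(a) ≤ α²|A|/64}` and
`B' = {b ∈ B : deg_{G ∩ (A'×B)}(b) ≥ α|A'|/4}` satisfy `|A'| ≥ |A*|/2 ≥ α|A|/8`,
and every `(a', b') ∈ A' × B'` is joined by at least
`(α²|A|/64)·(α³|B|/2048) = α⁵|A||B|/2¹⁷` length-3 paths in `G`. -/
theorem stmt_5 {X Y : Type*} [DecidableEq X] [DecidableEq Y]
    (A : Finset X) (B : Finset Y) (α : ℝ) (hα0 : 0 < α) (hα1 : α ≤ 1)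
    (G : Finset (X × Y)) (hG : G ⊆ A ×ˢ B)
    (Astar : Finset X) (hAstarA : Astar ⊆ A)
    (hAstar : α * (A.card : ℝ) / 4 ≤ (Astar.card : ℝ))
    (BAD : Finset (X × X))
    (hBAD : BAD = (Astar ×ˢ Astar).filter fun p =>
      ((B.filter fun b => (p.1, b) ∈ G ∧ (p.2, b) ∈ G).card : ℝ) ≤
        α ^ 3 * (B.card : ℝ) / 2048)
    (hBADcard : (BAD.card : ℝ) ≤ α ^ 2 * (Astar.card : ℝ) * (A.card : ℝ) / 256)
    (A' : Finset X)
    (hA' : A' = Astar.filter fun a =>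
      ((Astar.filter fun a' => (a, a') ∈ BAD).card : ℝ) ≤ α ^ 2 * (A.card : ℝ) / 64)
    (B' : Finset Y)
    (hB' : B' = B.filter fun b =>
      α * (A'.card : ℝ) / 4 ≤ ((A'.filter fun a => (a, b) ∈ G).card : ℝ)) :
    (Astar.card : ℝ) / 2 ≤ (A'.card : ℝ) ∧
    α * (A.card : ℝ) / 8 ≤ (Astar.card : ℝ) / 2 ∧
    ∀ a' ∈ A', ∀ b' ∈ B',
      α ^ 5 * (A.card : ℝ) * (B.card : ℝ) / 2 ^ 17 ≤
        ((((A ×ˢ B).filter fun p => (a', p.2) ∈ G ∧ p ∈ G ∧ (p.1, b') ∈ G)).card : ℝ) := by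
  classical
  have hA'sub : A' ⊆ Astar := by rw [hA']; exact filter_subset _ _
  -- Part 1: |A'| ≥ |A*|/2
  have part1 : (Astar.card : ℝ) / 2 ≤ (A'.card : ℝ) := by
    rcases Nat.eq_zero_or_pos A.card with hA0 | hApos
    · have : Astar = ∅ := subset_empty.mp (by rw [← Finset.card_eq_zero.mp hA0]; exact hAstarA)
      have hA'e : A' = ∅ := subset_empty.mp (this ▸ hA'sub)
      simp [this, hA'e]
    · set thr : ℝ := α ^ 2 * (A.card : ℝ) / 64 with hthr
      have hthrpos : 0 < thr := by
        have : (0 : ℝ) < (A.card : ℝ) := by exact_mod_cast hApos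
        positivity
      set S : Finset X := Astar.filter fun a =>
        ¬ ((Astar.filter fun a' => (a, a') ∈ BAD).card : ℝ) ≤ thr with hS
      have hcards : A'.card + S.card = Astar.card := by
        rw [hA', hS]; exact Finset.card_filter_add_card_filter_not _
      -- sum of degrees over S is at most |BAD|
      have hsum : ∑ a ∈ S, (Astar.filter fun a' => (a, a') ∈ BAD).card ≤ BAD.card := by
        refine sum_card_le_aux S _ BAD fun a _ a' ha' => ?_
        exact (mem_filter.mp ha').2
      have hlow : ∀ a ∈ S, thr ≤ ((Astar.filter fun a' => (a, a') ∈ BAD).card : ℝ) := by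
        intro a ha
        have := (mem_filter.mp ha).2
        linarith [not_le.mp this]
      have hSbound : (S.card : ℝ) * thr ≤ (BAD.card : ℝ) := by
        calc (S.card : ℝ) * thr = ∑ _a ∈ S, thr := by rw [Finset.sum_const, nsmul_eq_mul]
          _ ≤ ∑ a ∈ S, ((Astar.filter fun a' => (a, a') ∈ BAD).card : ℝ) :=
              Finset.sum_le_sum hlow
          _ = ((∑ a ∈ S, (Astar.filter fun a' => (a, a') ∈ BAD).card : ℕ) : ℝ) := by
              push_cast; ring
          _ ≤ (BAD.card : ℝ) := by exact_mod_cast hsum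
      -- |S| ≤ |A*|/4
      have hS4 : (S.card : ℝ) ≤ (Astar.card : ℝ) / 4 := by
        have h1 : (S.card : ℝ) * thr ≤ α ^ 2 * (Astar.card : ℝ) * (A.card : ℝ) / 256 :=
          le_trans hSbound hBADcard
        rw [hthr] at h1
        have hApos' : (0 : ℝ) < (A.card : ℝ) := by exact_mod_cast hApos
        nlinarith [sq_nonneg α, mul_pos (mul_pos (mul_pos hα0 hα0) hApos') hApos']
      have : (A'.card : ℝ) = (Astar.card : ℝ) - (S.card : ℝ) := by
        have := hcards
        push_cast [← this]
        ring
      linarith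
  refine ⟨part1, by linarith, ?_⟩
  -- Part 3
  intro a' ha' b' hb'
  have hA'A : (α * (A.card : ℝ) / 8) ≤ (A'.card : ℝ) := by linarith
  -- b' condition
  rw [hB', mem_filter] at hb'
  obtain ⟨hb'B, hb'deg⟩ := hb'
  -- a' condition
  have ha'star : a' ∈ Astar := hA'sub ha'
  have ha'deg : ((Astar.filter fun a'' => (a', a'') ∈ BAD).card : ℝ) ≤ α ^ 2 * (A.card : ℝ) / 64 := by
    rw [hA', mem_filter] at ha'
    exact ha'.2
  -- BAD is symmetric
  have hsymm : ∀ x y : X, (x, y) ∈ BAD → (y, x) ∈ BAD := by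
    intro x y hxy
    rw [hBAD, mem_filter, mem_product] at hxy ⊢
    refine ⟨⟨hxy.1.2, hxy.1.1⟩, ?_⟩
    have : (B.filter fun b => (y, b) ∈ G ∧ (x, b) ∈ G) =
        (B.filter fun b => (x, b) ∈ G ∧ (y, b) ∈ G) :=
      Finset.filter_congr fun b _ => and_comm
    rw [this]
    exact hxy.2
  -- Good set
  set Good : Finset X := A'.filter (fun a => (a, b') ∈ G ∧ (a, a') ∉ BAD) with hGood
  -- card of the set of bad partners of a' inside A'
  have hbad2 : ((A'.filter fun a => (a, a') ∈ BAD).card : ℝ) ≤ α ^ 2 * (A.card : ℝ) / 64 := by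
    refine le_trans ?_ ha'deg
    have : (A'.filter fun a => (a, a') ∈ BAD) ⊆
        (Astar.filter fun a'' => (a', a'') ∈ BAD) := by
      intro a ha
      rw [mem_filter] at ha ⊢
      exact ⟨hA'sub ha.1, hsymm _ _ ha.2⟩
    exact_mod_cast Finset.card_le_card this
  -- |Good| ≥ α²|A|/64
  have hGoodcard : α ^ 2 * (A.card : ℝ) / 64 ≤ (Good.card : ℝ) := by
    have hsplit : (A'.filter fun a => (a, b') ∈ G) ⊆
        Good ∪ (A'.filter fun a => (a, a') ∈ BAD) := by
      intro a ha
      rw [mem_filter] at ha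
      by_cases hb : (a, a') ∈ BAD
      · exact mem_union_right _ (mem_filter.mpr ⟨ha.1, hb⟩)
      · exact mem_union_left _ (mem_filter.mpr ⟨ha.1, ha.2, hb⟩)
    have hcard1 : ((A'.filter fun a => (a, b') ∈ G).card : ℝ) ≤
        (Good.card : ℝ) + ((A'.filter fun a => (a, a') ∈ BAD).card : ℝ) := by
      have := Finset.card_le_card hsplit
      have h2 := Finset.card_union_le Good (A'.filter fun a => (a, a') ∈ BAD)
      exact_mod_cast le_trans this h2
    nlinarith [hb'deg, hbad2, hA'A]
  -- each good a has many common neighbors with a'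
  set f : X → Finset Y := fun a => B.filter fun b => (a, b) ∈ G ∧ (a', b) ∈ G with hf
  have hfbig : ∀ a ∈ Good, α ^ 3 * (B.card : ℝ) / 2048 ≤ ((f a).card : ℝ) := by
    intro a ha
    rw [hGood, mem_filter] at ha
    obtain ⟨haA', _, hnb⟩ := ha
    have hastar : a ∈ Astar := hA'sub haA'
    by_contra hle
    push_neg at hle
    exact hnb (by
      rw [hBAD, mem_filter, mem_product]
      exact ⟨⟨hastar, ha'star⟩, le_of_lt hle⟩)
  -- the paths
  set P := (A ×ˢ B).filter fun p => (a', p.2) ∈ G ∧ p ∈ G ∧ (p.1, b') ∈ G with hP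
  have hsumP : ∑ a ∈ Good, (f a).card ≤ P.card := by
    refine sum_card_le_aux Good f P fun a ha b hb => ?_
    rw [hGood, mem_filter] at ha
    obtain ⟨haA', hab', _⟩ := ha
    rw [hf] at hb
    simp only [mem_filter] at hb
    rw [hP, mem_filter, mem_product]
    exact ⟨⟨hAstarA (hA'sub haA'), hb.1⟩, hb.2.2, hb.2.1, hab'⟩
  have hsum2 : (Good.card : ℝ) * (α ^ 3 * (B.card : ℝ) / 2048) ≤ (P.card : ℝ) := by
    calc (Good.card : ℝ) * (α ^ 3 * (B.card : ℝ) / 2048)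
        = ∑ _a ∈ Good, (α ^ 3 * (B.card : ℝ) / 2048) := by rw [Finset.sum_const, nsmul_eq_mul]
      _ ≤ ∑ a ∈ Good, ((f a).card : ℝ) := Finset.sum_le_sum hfbig
      _ = ((∑ a ∈ Good, (f a).card : ℕ) : ℝ) := by push_cast; ring
      _ ≤ (P.card : ℝ) := by exact_mod_cast hsumP
  have hBnn : (0 : ℝ) ≤ (B.card : ℝ) := Nat.cast_nonneg _
  have hAnn : (0 : ℝ) ≤ (A.card : ℝ) := Nat.cast_nonneg _
  have hGnn : (0 : ℝ) ≤ (Good.card : ℝ) := Nat.cast_nonneg _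
  have key : α ^ 5 * (A.card : ℝ) * (B.card : ℝ) / 2 ^ 17 ≤
      (Good.card : ℝ) * (α ^ 3 * (B.card : ℝ) / 2048) := by
    have h1 : (0 : ℝ) ≤ α ^ 3 * (B.card : ℝ) / 2048 := by positivity
    nlinarith [mul_le_mul_of_nonneg_left hGoodcard h1]
  linarith
end

section
/- Let M > 0, c > 0, and 0 < α ≤ 1 be real numbers, and let g₁, g₂, …, g_k be positive real numbers with g₁ ≤ M, with g_{i+1} ≤ g_i·(1 − c·g_i/M) for every 1 ≤ i < k, and with g_k ≥ αM. Then k ≤ 1 + 1/(cα). -/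
/-- The refined iteration analysis in the proof of the BSG Corollary: if positive
reals `g₁, …, g_k` satisfy `g₁ ≤ M`, `g_{i+1} ≤ g_i(1 − c·g_i/M)` for `1 ≤ i < k`,
and `g_k ≥ αM`, then `k ≤ 1 + 1/(cα)`. -/
theorem stmt_7 (M c α : ℝ) (hM : 0 < M) (hc : 0 < c) (hα0 : 0 < α) (hα1 : α ≤ 1)
    (k : ℕ) (hk : 1 ≤ k) (g : ℕ → ℝ)
    (hpos : ∀ i, 1 ≤ i → i ≤ k → 0 < g i)
    (hg1 : g 1 ≤ M)
    (hstep : ∀ i, 1 ≤ i → i < k → g (i + 1) ≤ g i * (1 - c * g i / M))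
    (hgk : α * M ≤ g k) :
    (k : ℝ) ≤ 1 + 1 / (c * α) := by
  have key : ∀ i, 1 ≤ i → i ≤ k → M / g 1 + c * ((i : ℝ) - 1) ≤ M / g i := by
    intro i
    induction i with
    | zero => omega
    | succ n ih =>
      intro _ h2
      rcases Nat.eq_zero_or_pos n with hn | hn
      · subst hn; simp
      · have hnk : n < k := Nat.lt_of_succ_le h2
        have hgn := hpos n hn (le_of_lt hnk)
        have hgn1 := hpos (n + 1) (by omega) h2
        have hst := hstep n hn hnk
        have ihn := ih hn (le_of_lt hnk)
        -- 1 - c * g n / M > 0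
        have hx : 0 < 1 - c * g n / M := by
          by_contra h
          push_neg at h
          have : g n * (1 - c * g n / M) ≤ 0 :=
            mul_nonpos_of_nonneg_of_nonpos hgn.le h
          linarith
        have h1 : M / g (n + 1) ≥ M / (g n * (1 - c * g n / M)) := by
          apply div_le_div_of_nonneg_left hM.le hgn1
          exact le_trans hst (le_refl _)
        have h2' : M / (g n * (1 - c * g n / M)) ≥ M / g n + c := by
          rw [ge_iff_le, le_div_iff₀ (mul_pos hgn hx)]
          have hexp : (M / g n + c) * (g n * (1 - c * g n / M)) =
              M - c ^ 2 * g n ^ 2 / M := by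
            field_simp
            ring
          rw [hexp]
          have : 0 ≤ c ^ 2 * g n ^ 2 / M := by positivity
          linarith
        have : (↑(n + 1) : ℝ) - 1 = (n : ℝ) := by push_cast; ring
        rw [this]
        calc M / g 1 + c * (n : ℝ) = (M / g 1 + c * ((n : ℝ) - 1)) + c := by ring
          _ ≤ M / g n + c := by linarith
          _ ≤ M / (g n * (1 - c * g n / M)) := h2'
          _ ≤ M / g (n + 1) := h1
  have hg1pos := hpos 1 le_rfl hk
  have hk1 : (1 : ℝ) ≤ M / g 1 := (one_le_div hg1pos).mpr hg1
  have hkey := key k hk le_rfl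
  have hgkpos := hpos k hk le_rfl
  have hub : M / g k ≤ 1 / α := by
    rw [div_le_div_iff₀ hgkpos hα0]
    linarith [hgk]
  have h1 : 1 + c * ((k : ℝ) - 1) ≤ 1 / α := by linarith
  have h2 : c * ((k : ℝ) - 1) ≤ 1 / α := by
    have : (0:ℝ) < 1/α := by positivity
    linarith
  have : (k : ℝ) - 1 ≤ 1 / (c * α) := by
    rw [le_div_iff₀ (by positivity)]
    calc ((k:ℝ) - 1) * (c * α) = (c * ((k:ℝ)-1)) * α := by ring
      _ ≤ (1/α) * α := by
        apply mul_le_mul_of_nonneg_right h2 hα0.le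
      _ = 1 := by field_simp
  linarith
end

section
/- There is an absolute constant c > 0 with the following property. For every integer ℓ ≥ 1, every integer U ≥ 2, and every finite set T ⊆ {0, 1, …, U−1} with |T| = N ≥ 2, there exists a family F of at most c·2^ℓ·log₂ N tuples (p₁, …, p_ℓ) of primes, each prime at most c·N^{1/ℓ}·(log₂ U)², such that for every x ∈ T there is a tuple (p₁, …, p_ℓ) ∈ F with: no y ∈ T with y ≠ x satisfies y ≡ x (mod p_j) for all j = 1, …, ℓ. -/
open Finset

private lemma myLogMulLe (a b : ℕ) : Nat.log 2 (a * b) ≤ Nat.log 2 a + Nat.log 2 b + 1 := by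
  rcases eq_or_ne a 0 with rfl | ha; · simp
  rcases eq_or_ne b 0 with rfl | hb; · simp
  have h1 : a < 2 ^ (Nat.log 2 a + 1) := Nat.lt_pow_succ_log_self one_lt_two a
  have h2 : b < 2 ^ (Nat.log 2 b + 1) := Nat.lt_pow_succ_log_self one_lt_two b
  have h3 : a * b < 2 ^ (Nat.log 2 a + Nat.log 2 b + 2) := by
    calc a * b < 2 ^ (Nat.log 2 a + 1) * 2 ^ (Nat.log 2 b + 1) :=
          Nat.mul_lt_mul_of_lt_of_lt h1 h2
      _ = 2 ^ (Nat.log 2 a + Nat.log 2 b + 2) := by ring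
  have := Nat.log_lt_of_lt_pow (Nat.mul_ne_zero ha hb) h3
  omega

private lemma myOmegaLe (d : ℕ) (hd : d ≠ 0) : d.primeFactors.card ≤ Nat.log 2 d := by
  have h1 : 2 ^ d.primeFactors.card ≤ ∏ p ∈ d.primeFactors, p := by
    rw [← Finset.prod_const]
    exact Finset.prod_le_prod' fun p hp => (Nat.prime_of_mem_primeFactors hp).two_le
  have h2 : (∏ p ∈ d.primeFactors, p) ≤ d :=
    Nat.le_of_dvd (Nat.pos_of_ne_zero hd) (Nat.prod_primeFactors_dvd d)
  exact (Nat.le_log_iff_pow_le one_lt_two hd).mpr (h1.trans h2)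

private lemma myCheb (m : ℕ) (hm : 1 ≤ m) :
    2 * m ≤ (((Finset.range (2 * m + 1)).filter Nat.Prime).card + 1) * (Nat.log 2 (2 * m) + 1) := by
  set π := ((Finset.range (2 * m + 1)).filter Nat.Prime).card with hπ
  have hB : 4 ^ m ≤ 2 * m * Nat.centralBinom m :=
    Nat.four_pow_le_two_mul_self_mul_centralBinom m hm
  have hfac : Nat.centralBinom m ≤ (2 * m) ^ π := by
    conv_lhs => rw [← Nat.factorization_prod_pow_eq_self (Nat.centralBinom_ne_zero m)]
    rw [Nat.prod_factorization_eq_prod_primeFactors]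
    calc (∏ p ∈ (Nat.centralBinom m).primeFactors, p ^ (Nat.centralBinom m).factorization p)
        ≤ ∏ _p ∈ (Nat.centralBinom m).primeFactors, 2 * m := by
          refine Finset.prod_le_prod' fun p hp => ?_
          exact Nat.pow_factorization_choose_le (by omega)
      _ = (2 * m) ^ (Nat.centralBinom m).primeFactors.card := Finset.prod_const _
      _ ≤ (2 * m) ^ π := by
          refine Nat.pow_le_pow_right (by omega) ?_
          refine Finset.card_le_card fun p hp => ?_
          have hp' := Nat.prime_of_mem_primeFactors hp
          have hdvd := Nat.dvd_of_mem_primeFactors hp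
          have hple : p ≤ 2 * m := by
            have h1 : p ^ 1 ≤ p ^ (Nat.centralBinom m).factorization p := by
              refine Nat.pow_le_pow_right hp'.pos ?_
              have := (Nat.Prime.factorization_pos_of_dvd hp' (Nat.centralBinom_ne_zero m) hdvd)
              omega
            have h2 : p ^ (Nat.centralBinom m).factorization p ≤ 2 * m :=
              Nat.pow_factorization_choose_le (by omega)
            simpa using h1.trans h2
          exact Finset.mem_filter.mpr ⟨Finset.mem_range.mpr (by omega), hp'⟩
  have h4 : 2 ^ (2 * m) ≤ (2 * m) ^ (π + 1) := by
    calc 2 ^ (2 * m) = 4 ^ m := by rw [show (4:ℕ) = 2^2 by norm_num, ← pow_mul, mul_comm]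
      _ ≤ 2 * m * Nat.centralBinom m := hB
      _ ≤ 2 * m * (2 * m) ^ π := Nat.mul_le_mul_left _ hfac
      _ = (2 * m) ^ (π + 1) := by rw [pow_succ, mul_comm]
  have h5 : (2 * m) ≤ 2 ^ (Nat.log 2 (2 * m) + 1) :=
    (Nat.lt_pow_succ_log_self one_lt_two _).le
  have h6 : 2 ^ (2 * m) ≤ 2 ^ ((π + 1) * (Nat.log 2 (2 * m) + 1)) := by
    calc 2 ^ (2 * m) ≤ (2 * m) ^ (π + 1) := h4
      _ ≤ (2 ^ (Nat.log 2 (2 * m) + 1)) ^ (π + 1) := Nat.pow_le_pow_left h5 _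
      _ = 2 ^ ((π + 1) * (Nat.log 2 (2 * m) + 1)) := by rw [← pow_mul, mul_comm]
  have := (Nat.pow_le_pow_iff_right (le_refl 2)).mp h6
  omega

private lemma myGreedy {α : Type*} [DecidableEq α] (Q : Finset α) (T : Finset ℕ)
    (good : α → ℕ → Prop) [∀ q x, Decidable (good q x)]
    (hQ : 0 < Q.card)
    (h : ∀ x ∈ T, Q.card ≤ 2 * (Q.filter (fun q => good q x)).card) :
    ∀ (m : ℕ) (S : Finset ℕ), S ⊆ T → S.card ≤ m →
      ∃ F : Finset α, F ⊆ Q ∧ F.card ≤ Nat.log 2 S.card + 1 ∧ ∀ x ∈ S, ∃ q ∈ F, good q x := by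
  intro m
  induction m with
  | zero =>
    intro S _ hS
    have : S = ∅ := Finset.card_eq_zero.mp (Nat.le_zero.mp hS)
    subst this
    exact ⟨∅, by simp, by simp, by simp⟩
  | succ m ih =>
    intro S hST hSm
    rcases S.eq_empty_or_nonempty with rfl | hS
    · exact ⟨∅, by simp, by simp, by simp⟩
    have hScard : 1 ≤ S.card := Finset.card_pos.mpr hS
    have key : ∃ q ∈ Q, S.card ≤ 2 * (S.filter (fun x => good q x)).card := by
      by_contra hcon
      push_neg at hcon
      have hsum : ∑ q ∈ Q, (S.filter (fun x => good q x)).card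
          = ∑ x ∈ S, (Q.filter (fun q => good q x)).card := by
        simp_rw [Finset.card_filter]
        rw [Finset.sum_comm]
      have h1 : S.card * Q.card ≤ 2 * ∑ q ∈ Q, (S.filter fun x => good q x).card := by
        calc S.card * Q.card = ∑ _x ∈ S, Q.card := by rw [Finset.sum_const, smul_eq_mul]
          _ ≤ ∑ x ∈ S, 2 * (Q.filter (fun q => good q x)).card :=
              Finset.sum_le_sum (fun x hx => h x (hST hx))
          _ = 2 * ∑ x ∈ S, (Q.filter (fun q => good q x)).card := by rw [Finset.mul_sum]
          _ = 2 * ∑ q ∈ Q, (S.filter fun x => good q x).card := by rw [hsum]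
      have h2 : 2 * ∑ q ∈ Q, (S.filter fun x => good q x).card ≤ Q.card * (S.card - 1) := by
        calc 2 * ∑ q ∈ Q, (S.filter fun x => good q x).card
            = ∑ q ∈ Q, 2 * (S.filter fun x => good q x).card := by rw [Finset.mul_sum]
          _ ≤ ∑ _q ∈ Q, (S.card - 1) := Finset.sum_le_sum (fun q hq => by
              have := hcon q hq; omega)
          _ = Q.card * (S.card - 1) := by rw [Finset.sum_const, smul_eq_mul]
      have h3 : Q.card * (S.card - 1) < Q.card * S.card :=
        Nat.mul_lt_mul_of_le_of_lt (le_refl _) (by omega) hQ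
      rw [mul_comm] at h1
      omega
    obtain ⟨q, hqQ, hq⟩ := key
    set S' := S.filter (fun x => ¬ good q x) with hS'def
    have hcov : (S.filter (fun x => good q x)).card + S'.card = S.card :=
      Finset.card_filter_add_card_filter_not _
    have hS'T : S' ⊆ T := (Finset.filter_subset _ _).trans hST
    have hcover : ∀ x ∈ S, x ∉ S' → good q x := by
      intro x hx hx'
      by_contra hg
      exact hx' (Finset.mem_filter.mpr ⟨hx, hg⟩)
    rcases eq_or_ne S' ∅ with hS'e | hS'ne
    · refine ⟨{q}, by simpa using hqQ, by simp, fun x hx => ⟨q, Finset.mem_singleton_self q, ?_⟩⟩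
      exact hcover x hx (by simp [hS'e])
    · have hS'c : 1 ≤ S'.card := Finset.card_pos.mpr (Finset.nonempty_of_ne_empty hS'ne)
      have hhalf : 2 * S'.card ≤ S.card := by omega
      obtain ⟨F, hFQ, hFc, hF⟩ := ih S' hS'T (by
        have : S'.card < S.card := by omega
        omega)
      refine ⟨insert q F, Finset.insert_subset hqQ hFQ, ?_, ?_⟩
      · have hcard := Finset.card_insert_le q F
        have hlog : Nat.log 2 S'.card + 1 ≤ Nat.log 2 S.card := by
          calc Nat.log 2 S'.card + 1 = Nat.log 2 (S'.card * 2) :=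
                (Nat.log_mul_base one_lt_two (by omega)).symm
            _ ≤ Nat.log 2 S.card := Nat.log_mono_right (by omega)
        omega
      · intro x hx
        by_cases hg : good q x
        · exact ⟨q, Finset.mem_insert_self q F, hg⟩
        · obtain ⟨p, hp, hgp⟩ := hF x (Finset.mem_filter.mpr ⟨hx, hg⟩)
          exact ⟨p, Finset.mem_insert_of_mem hp, hgp⟩

private lemma myPerY {ℓ U L : ℕ} (PS : Finset ℕ) (hPSp : ∀ p ∈ PS, p.Prime)
    (hLU : Nat.log 2 U ≤ L) (x y : ℕ) (hx : x < U) (hy : y < U) (hxy : y ≠ x) :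
    (((Fintype.piFinset (fun _ : Fin ℓ => PS))).filter
      (fun q => ∀ j : Fin ℓ, y % q j = x % q j)).card ≤ L ^ ℓ := by
  classical
  have hD0 : ((x : ℤ) - (y : ℤ)).natAbs ≠ 0 := by
    intro hc
    rw [Int.natAbs_eq_zero, sub_eq_zero] at hc
    exact hxy (by exact_mod_cast hc.symm)
  have hDU : ((x : ℤ) - (y : ℤ)).natAbs ≤ U := by omega
  have hsub2 : ((Fintype.piFinset (fun _ : Fin ℓ => PS))).filter
      (fun q => ∀ j : Fin ℓ, y % q j = x % q j) ⊆
      Fintype.piFinset (fun _ : Fin ℓ => PS.filter (· ∣ ((x : ℤ) - (y : ℤ)).natAbs)) := by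
    intro q hq
    rw [Finset.mem_filter] at hq
    obtain ⟨hqQ, hmod⟩ := hq
    rw [Fintype.mem_piFinset] at hqQ
    rw [Fintype.mem_piFinset]
    intro j
    refine Finset.mem_filter.mpr ⟨hqQ j, ?_⟩
    have h2 : ((q j : ℕ) : ℤ) ∣ (x : ℤ) - (y : ℤ) := Nat.modEq_iff_dvd.mp (hmod j)
    exact Int.natCast_dvd.mp h2
  have hcard2 : (PS.filter (· ∣ ((x : ℤ) - (y : ℤ)).natAbs)).card ≤ L := by
    have hsub3 : PS.filter (· ∣ ((x : ℤ) - (y : ℤ)).natAbs) ⊆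
        (((x : ℤ) - (y : ℤ)).natAbs).primeFactors := by
      intro p hp
      rw [Finset.mem_filter] at hp
      exact Nat.mem_primeFactors.mpr ⟨hPSp p hp.1, hp.2, hD0⟩
    calc (PS.filter (· ∣ ((x : ℤ) - (y : ℤ)).natAbs)).card
        ≤ (((x : ℤ) - (y : ℤ)).natAbs).primeFactors.card := Finset.card_le_card hsub3
      _ ≤ Nat.log 2 ((x : ℤ) - (y : ℤ)).natAbs := myOmegaLe _ hD0
      _ ≤ L := le_trans (Nat.log_mono_right hDU) hLU
  calc (((Fintype.piFinset (fun _ : Fin ℓ => PS))).filter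
        (fun q => ∀ j : Fin ℓ, y % q j = x % q j)).card
      ≤ (Fintype.piFinset (fun _ : Fin ℓ =>
          PS.filter (· ∣ ((x : ℤ) - (y : ℤ)).natAbs))).card := Finset.card_le_card hsub2
    _ = (PS.filter (· ∣ ((x : ℤ) - (y : ℤ)).natAbs)).card ^ ℓ := Fintype.card_piFinset_const _ _
    _ ≤ L ^ ℓ := Nat.pow_le_pow_left hcard2 ℓ

/-- The deterministic hash-family construction underlying the derandomized FFT Lemma:
there is an absolute constant `c > 0` so that for every `ℓ ≥ 1`, `U ≥ 2` and
`T ⊆ [U]` with `|T| = N ≥ 2`, there is a family of at most `c·2^ℓ·log₂ N` tuples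
`(p₁, …, p_ℓ)` of primes, each prime at most `c·N^{1/ℓ}·(log₂ U)²`, such that every
`x ∈ T` is separated from all other elements of `T` by some tuple (no `y ∈ T`, `y ≠ x`,
agrees with `x` modulo all `ℓ` primes of that tuple). -/
theorem stmt_11 : ∃ c : ℝ, 0 < c ∧
    ∀ (ℓ U N : ℕ) (T : Finset ℕ),
      1 ≤ ℓ → 2 ≤ U → (∀ x ∈ T, x < U) → T.card = N → 2 ≤ N →
      ∃ (k : ℕ) (P : Fin k → Fin ℓ → ℕ),
        (k : ℝ) ≤ c * 2 ^ ℓ * Real.logb 2 N ∧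
        (∀ i j, (P i j).Prime ∧
          (P i j : ℝ) ≤ c * (N : ℝ) ^ ((1 : ℝ) / ℓ) * (Real.logb 2 U) ^ 2) ∧
        ∀ x ∈ T, ∃ i, ∀ y ∈ T, y ≠ x → ¬ (∀ j, y % P i j = x % P i j) := by
  classical
  refine ⟨128, by norm_num, ?_⟩
  intro ℓ U N T hℓ hU hTU hTN hN
  have hNU : N ≤ U := by
    rw [← hTN]
    calc T.card ≤ (Finset.range U).card :=
          Finset.card_le_card (fun x hx => Finset.mem_range.mpr (hTU x hx))
      _ = U := Finset.card_range U
  have hlog22 : Nat.log 2 2 = 1 := by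
    rw [show (2:ℕ) = 2^1 from rfl]; exact Nat.log_pow one_lt_two 1
  set L := Nat.log 2 U with hLdef
  have hL1 : 1 ≤ L := by
    have h2 : Nat.log 2 2 ≤ Nat.log 2 U := Nat.log_mono_right hU
    omega
  set r : ℝ := (N : ℝ) ^ ((1 : ℝ) / ℓ) with hrdef
  have hN1 : (1 : ℝ) ≤ (N : ℝ) := by exact_mod_cast (by omega : 1 ≤ N)
  have hr1 : 1 ≤ r := Real.one_le_rpow hN1 (by positivity)
  set A := ⌈r⌉₊ with hAdef
  have hA1 : 1 ≤ A := Nat.one_le_ceil_iff.mpr (by linarith)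
  have hrA : r ≤ (A : ℝ) := Nat.le_ceil r
  have hA2r : (A : ℝ) ≤ 2 * r := by
    have := Nat.ceil_lt_add_one (by linarith : (0:ℝ) ≤ r)
    linarith
  have hℓ0 : (ℓ : ℝ) ≠ 0 := Nat.cast_ne_zero.mpr (by omega)
  have hrpow : r ^ ℓ = (N : ℝ) := by
    rw [hrdef, ← Real.rpow_natCast ((N : ℝ) ^ ((1 : ℝ) / ℓ)) ℓ,
      ← Real.rpow_mul (by positivity : (0:ℝ) ≤ (N:ℝ)), one_div,
      inv_mul_cancel₀ hℓ0, Real.rpow_one]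
  have hAN : N ≤ A ^ ℓ := by
    have h1 : (N : ℝ) ≤ ((A : ℕ) : ℝ) ^ ℓ := by
      calc (N : ℝ) = r ^ ℓ := hrpow.symm
        _ ≤ (A : ℝ) ^ ℓ := pow_le_pow_left₀ (by linarith) hrA ℓ
    exact_mod_cast h1
  have hAleN : A ≤ N := by
    have h1 : r ≤ (N : ℝ) := by
      calc r ≤ (N : ℝ) ^ (1 : ℝ) := Real.rpow_le_rpow_of_exponent_le hN1 (by
            rw [div_le_one (by positivity)]
            exact_mod_cast hℓ)
        _ = (N : ℝ) := Real.rpow_one _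
    exact Nat.ceil_le.mpr (by exact_mod_cast h1)
  set n := 2 * A * L with hndef
  have hn1 : 1 ≤ n := by
    calc 1 ≤ 2 * 1 * 1 := by norm_num
      _ ≤ 2 * A * L := Nat.mul_le_mul (Nat.mul_le_mul (le_refl 2) hA1) hL1
  set M := 32 * n * L with hMdef
  set PS := (Finset.range (M + 1)).filter Nat.Prime with hPSdef
  have hPSp : ∀ p ∈ PS, p.Prime := fun p hp => (Finset.mem_filter.mp hp).2
  have hPS : n ≤ PS.card := by
    by_contra hcon
    push_neg at hcon
    have hM2 : M = 2 * (16 * n * L) := by rw [hMdef]; ring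
    have hcheb := myCheb (16 * n * L) (by
      calc 1 ≤ 16 * 1 * 1 := by norm_num
        _ ≤ 16 * n * L := Nat.mul_le_mul (Nat.mul_le_mul (le_refl 16) hn1) hL1)
    rw [← hM2] at hcheb
    have hlogA : Nat.log 2 A ≤ L := le_trans (Nat.log_mono_right hAleN) (Nat.log_mono_right hNU)
    have hlogL : Nat.log 2 L ≤ L := Nat.log_le_self 2 L
    have hlogn : Nat.log 2 n ≤ 2 * L + 3 := by
      calc Nat.log 2 n = Nat.log 2 (2 * A * L) := by rw [hndef]
        _ ≤ Nat.log 2 (2 * A) + Nat.log 2 L + 1 := myLogMulLe _ _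
        _ ≤ (Nat.log 2 2 + Nat.log 2 A + 1) + Nat.log 2 L + 1 := by
            have := myLogMulLe 2 A; omega
        _ ≤ 2 * L + 3 := by omega
    have hlogM : Nat.log 2 M ≤ 3 * L + 11 := by
      have h32 : Nat.log 2 32 = 5 := by
        rw [show (32:ℕ) = 2 ^ 5 by norm_num]; exact Nat.log_pow one_lt_two 5
      calc Nat.log 2 M = Nat.log 2 (32 * n * L) := by rw [hMdef]
        _ ≤ Nat.log 2 (32 * n) + Nat.log 2 L + 1 := myLogMulLe _ _
        _ ≤ (Nat.log 2 32 + Nat.log 2 n + 1) + Nat.log 2 L + 1 := by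
            have := myLogMulLe 32 n; omega
        _ ≤ 3 * L + 11 := by omega
    have hfin : M < M := by
      calc M ≤ (PS.card + 1) * (Nat.log 2 M + 1) := hcheb
        _ ≤ n * (32 * L - 1) := Nat.mul_le_mul (by omega) (by omega)
        _ < n * (32 * L) := Nat.mul_lt_mul_of_le_of_lt (le_refl n) (by omega) (by omega)
        _ = M := by rw [hMdef]; ring
    exact absurd hfin (lt_irrefl M)
  set Q := Fintype.piFinset (fun _ : Fin ℓ => PS) with hQdef
  have hQcard : Q.card = PS.card ^ ℓ := Fintype.card_piFinset_const PS ℓ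
  have hQpos : 0 < Q.card := by
    rw [hQcard]; exact Nat.pow_pos (by omega)
  have hQbig : 2 * N * L ^ ℓ ≤ Q.card := by
    rw [hQcard]
    calc 2 * N * L ^ ℓ ≤ 2 ^ ℓ * A ^ ℓ * L ^ ℓ := by
          refine Nat.mul_le_mul (Nat.mul_le_mul ?_ hAN) (le_refl _)
          calc 2 = 2 ^ 1 := (pow_one 2).symm
            _ ≤ 2 ^ ℓ := Nat.pow_le_pow_right (by norm_num) hℓ
      _ = n ^ ℓ := by rw [hndef, mul_pow, mul_pow]
      _ ≤ PS.card ^ ℓ := Nat.pow_le_pow_left hPS ℓ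
  have hgood : ∀ x ∈ T, Q.card ≤
      2 * (Q.filter (fun q => ∀ y ∈ T, y ≠ x → ¬ (∀ j : Fin ℓ, y % q j = x % q j))).card := by
    intro x hx
    have hsplit := Finset.card_filter_add_card_filter_not
      (s := Q) (p := fun q => ∀ y ∈ T, y ≠ x → ¬ (∀ j : Fin ℓ, y % q j = x % q j))
    have hbad : (Q.filter (fun q => ¬ ∀ y ∈ T, y ≠ x → ¬ (∀ j : Fin ℓ, y % q j = x % q j))).card
        ≤ (N - 1) * L ^ ℓ := by
      have hsub : Q.filter (fun q => ¬ ∀ y ∈ T, y ≠ x → ¬ (∀ j : Fin ℓ, y % q j = x % q j)) ⊆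
          (T.erase x).biUnion (fun y => Q.filter (fun q => ∀ j : Fin ℓ, y % q j = x % q j)) := by
        intro q hq
        rw [Finset.mem_filter] at hq
        obtain ⟨hqQ, hq⟩ := hq
        push_neg at hq
        obtain ⟨y, hyT, hyx, hmod⟩ := hq
        exact Finset.mem_biUnion.mpr ⟨y, Finset.mem_erase.mpr ⟨hyx, hyT⟩,
          Finset.mem_filter.mpr ⟨hqQ, hmod⟩⟩
      calc (Q.filter (fun q => ¬ ∀ y ∈ T, y ≠ x → ¬ (∀ j : Fin ℓ, y % q j = x % q j))).card
          ≤ ((T.erase x).biUnion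
              (fun y => Q.filter (fun q => ∀ j : Fin ℓ, y % q j = x % q j))).card :=
            Finset.card_le_card hsub
        _ ≤ ∑ y ∈ T.erase x, (Q.filter (fun q => ∀ j : Fin ℓ, y % q j = x % q j)).card :=
            Finset.card_biUnion_le
        _ ≤ ∑ _y ∈ T.erase x, L ^ ℓ := by
            refine Finset.sum_le_sum (fun y hy => ?_)
            obtain ⟨hyx, hyT⟩ := Finset.mem_erase.mp hy
            exact myPerY PS hPSp (le_refl L) x y (hTU x hx) (hTU y hyT) hyx
        _ = (T.erase x).card * L ^ ℓ := by rw [Finset.sum_const, smul_eq_mul]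
        _ = (N - 1) * L ^ ℓ := by rw [Finset.card_erase_of_mem hx, hTN]
    have h2N : 2 * ((N - 1) * L ^ ℓ) ≤ 2 * N * L ^ ℓ := by
      rw [mul_assoc]
      exact Nat.mul_le_mul_left 2 (Nat.mul_le_mul_right _ (Nat.sub_le N 1))
    have hb2 : 2 * (Q.filter
        (fun q => ¬ ∀ y ∈ T, y ≠ x → ¬ (∀ j : Fin ℓ, y % q j = x % q j))).card ≤ Q.card :=
      le_trans (le_trans (Nat.mul_le_mul_left 2 hbad) h2N) hQbig
    rw [← hsplit] at hb2 ⊢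
    rw [two_mul] at hb2
    have hble := Nat.le_of_add_le_add_right hb2
    calc (Q.filter
          (fun q => ∀ y ∈ T, y ≠ x → ¬ (∀ j : Fin ℓ, y % q j = x % q j))).card
        + (Q.filter
          (fun q => ¬ ∀ y ∈ T, y ≠ x → ¬ (∀ j : Fin ℓ, y % q j = x % q j))).card
        ≤ (Q.filter
          (fun q => ∀ y ∈ T, y ≠ x → ¬ (∀ j : Fin ℓ, y % q j = x % q j))).card
        + (Q.filter
          (fun q => ∀ y ∈ T, y ≠ x → ¬ (∀ j : Fin ℓ, y % q j = x % q j))).card :=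
          Nat.add_le_add_left hble _
      _ = 2 * (Q.filter
          (fun q => ∀ y ∈ T, y ≠ x → ¬ (∀ j : Fin ℓ, y % q j = x % q j))).card :=
          (two_mul _).symm
  obtain ⟨F, hFQ, hFcard, hFcover⟩ := myGreedy Q T
    (fun q x => ∀ y ∈ T, y ≠ x → ¬ (∀ j : Fin ℓ, y % q j = x % q j)) hQpos hgood
    N T (Finset.Subset.refl T) (le_of_eq hTN)
  rw [hTN] at hFcard
  have hlen : F.toList.length = F.card := Finset.length_toList F
  refine ⟨F.toList.length, fun i => F.toList.get i, ?_, ?_, ?_⟩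
  · have hlogN1 : 1 ≤ Nat.log 2 N := by
      have h2 : Nat.log 2 2 ≤ Nat.log 2 N := Nat.log_mono_right hN
      omega
    have hk : F.toList.length ≤ 2 * Nat.log 2 N := by omega
    have hcast : (Nat.log 2 N : ℝ) ≤ Real.logb 2 N := Real.natLog_le_logb N 2
    have hlb0 : (1 : ℝ) ≤ Real.logb 2 N := by
      calc (1:ℝ) ≤ (Nat.log 2 N : ℝ) := by exact_mod_cast hlogN1
        _ ≤ _ := hcast
    have h2pow : (2 : ℝ) ≤ 128 * 2 ^ ℓ := by
      have h1 : (1:ℝ) ≤ 2 ^ ℓ := one_le_pow₀ (by norm_num)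
      nlinarith
    calc (F.toList.length : ℝ) ≤ 2 * (Nat.log 2 N : ℝ) := by exact_mod_cast hk
      _ ≤ 2 * Real.logb 2 N := by linarith
      _ ≤ 128 * 2 ^ ℓ * Real.logb 2 N := by nlinarith
  · intro i j
    have hmem : F.toList.get i ∈ Q := hFQ (Finset.mem_toList.mp (F.toList.get_mem i))
    rw [hQdef, Fintype.mem_piFinset] at hmem
    have hj := hmem j
    rw [hPSdef, Finset.mem_filter, Finset.mem_range] at hj
    refine ⟨hj.2, ?_⟩
    have hle : F.toList.get i j ≤ M := by omega
    have hLreal : (L : ℝ) ≤ Real.logb 2 U := Real.natLog_le_logb U 2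
    have hL0 : (0 : ℝ) ≤ (L : ℝ) := by positivity
    have hMreal : (M : ℝ) ≤ 128 * r * (Real.logb 2 U) ^ 2 := by
      have hMeq : (M : ℝ) = 64 * (A : ℝ) * (L : ℝ) ^ 2 := by
        rw [hMdef, hndef]; push_cast; ring
      rw [hMeq]
      calc 64 * (A : ℝ) * (L : ℝ) ^ 2 ≤ 64 * (2 * r) * (Real.logb 2 U) ^ 2 := by gcongr
        _ = 128 * r * (Real.logb 2 U) ^ 2 := by ring
    calc ((F.toList.get i j : ℕ) : ℝ) ≤ (M : ℝ) := by exact_mod_cast hle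
      _ ≤ 128 * r * (Real.logb 2 U) ^ 2 := hMreal
  · intro x hx
    obtain ⟨q, hqF, hgq⟩ := hFcover x hx
    have hqL : q ∈ F.toList := Finset.mem_toList.mpr hqF
    obtain ⟨i, hi⟩ := List.mem_iff_get.mp hqL
    refine ⟨i, ?_⟩
    intro y hy hyx
    change ¬ ∀ j : Fin ℓ, y % F.toList.get i j = x % F.toList.get i j
    rw [hi]
    exact hgq y hy hyx
end

section
/- Let u, v : ℤ → ℕ be finitely supported functions and let z = u * v be their convolution, i.e., z(s) = ∑_{a+b=s} u(a)·v(b). Let h : ℤ → ℤ and ĥ : ℤ → ℤ satisfy ĥ(h(a) + h(b)) = h(a + b) for all a, b ∈ ℤ. Let T be a finite subset of ℤ containing {a + b : u(a) ≠ 0, v(b) ≠ 0}, and let s ∈ T be such that for all y ∈ T, h(y) = h(s) implies y = s. Then ∑_{(a,b) : ĥ(h(a)+h(b)) = h(s)} u(a)·v(b) = z(s). -/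
/-- Correctness of the deterministic sparse convolution algorithm: for finitely
supported `u, v : ℤ → ℕ` with convolution `z(s) = ∑_{a+b=s} u(a)v(b)`, a
pseudo-additive pair `(h, ĥ)`, a finite `T ⊇ {a+b : u(a) ≠ 0, v(b) ≠ 0}`, and `s ∈ T`
with no collisions under `h` within `T`, the hashed convolution recovers `z(s)`:
`∑_{(a,b) : ĥ(h(a)+h(b)) = h(s)} u(a)v(b) = z(s)`. -/
theorem stmt_13 (u v : ℤ →₀ ℕ) (h hh : ℤ → ℤ)
    (hadd : ∀ a b : ℤ, hh (h a + h b) = h (a + b))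
    (T : Finset ℤ) (hT : ∀ a b : ℤ, u a ≠ 0 → v b ≠ 0 → a + b ∈ T)
    (s : ℤ) (hs : s ∈ T) (hcoll : ∀ y ∈ T, h y = h s → y = s) :
    (∑ a ∈ u.support, ∑ b ∈ v.support, if hh (h a + h b) = h s then u a * v b else 0) =
      ∑ a ∈ u.support, ∑ b ∈ v.support, if a + b = s then u a * v b else 0 := by
  refine Finset.sum_congr rfl fun a ha => Finset.sum_congr rfl fun b hb => ?_
  rw [hadd]
  congr 1
  have hmem := hT a b (Finsupp.mem_support_iff.mp ha) (Finsupp.mem_support_iff.mp hb)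
  simp only [eq_iff_iff]
  exact ⟨fun H => hcoll _ hmem H, fun H => H ▸ rfl⟩
end

section
/- Let A = {a₁, …, a_m} ⊆ ℤ² and B = {b₁, …, b_r} ⊆ ℤ² be finite sets given by sequences satisfying a_{i+1} − a_i ∈ {(1,0), (0,1)} for all 1 ≤ i < m and b_{j+1} − b_j ∈ {(1,0), (0,1)} for all 1 ≤ j < r (connected monotone increasing sets). Then for every k ∈ ℤ, the fiber {y ∈ ℤ : (k, y) ∈ A + B} is an interval of integers: if y₁ ≤ y ≤ y₂ and (k, y₁) ∈ A+B and (k, y₂) ∈ A+B, then (k, y) ∈ A+B. -/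
open Finset Pointwise

private def Pt (m r : ℕ) (a b : ℕ → ℤ × ℤ) (s : ℕ) (v : ℤ) : Prop :=
  ∃ i j, i < m ∧ j < r ∧ i + j = s ∧ (a i).1 + (b j).1 = v

private lemma ivt_aux (f : ℕ → ℤ) (lo : ℕ) :
    ∀ d : ℕ, (∀ n, lo ≤ n → n + 1 ≤ lo + d → (f (n+1) - f n).natAbs ≤ 1) →
    ∀ v : ℤ, ((f lo ≤ v ∧ v ≤ f (lo + d)) ∨ (f (lo + d) ≤ v ∧ v ≤ f lo)) →
    ∃ n, lo ≤ n ∧ n ≤ lo + d ∧ f n = v := by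
  intro d
  induction d with
  | zero =>
    intro _ v hv
    simp only [Nat.add_zero] at hv
    exact ⟨lo, le_refl _, le_refl _, by omega⟩
  | succ d ih =>
    intro hstep v hv
    rw [show lo + (d+1) = (lo + d) + 1 from rfl] at hv
    have hq : (f (lo + d + 1) - f (lo + d)).natAbs ≤ 1 := hstep _ (by omega) (by omega)
    have key : ((f lo ≤ v ∧ v ≤ f (lo + d)) ∨ (f (lo + d) ≤ v ∧ v ≤ f lo)) ∨
        v = f (lo + d + 1) := by omega
    rcases key with key | key
    · obtain ⟨n, hn1, hn2, hn3⟩ := ih (fun n h1 h2 => hstep n h1 (by omega)) v key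
      exact ⟨n, hn1, by omega, hn3⟩
    · exact ⟨lo + d + 1, by omega, by omega, key.symm⟩

private lemma up_step (m r : ℕ) (a b : ℕ → ℤ × ℤ)
    (ha : ∀ i, i + 1 < m → a (i + 1) - a i = (1, 0) ∨ a (i + 1) - a i = (0, 1))
    (hb : ∀ j, j + 1 < r → b (j + 1) - b j = (1, 0) ∨ b (j + 1) - b j = (0, 1))
    (s : ℕ) (v : ℤ) (hs : s + 3 ≤ m + r) (h : Pt m r a b s v) :
    ∃ v', v ≤ v' ∧ Pt m r a b (s+1) v' := by
  obtain ⟨i, j, hi, hj, hij, hv⟩ := h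
  by_cases him : i + 1 < m
  · refine ⟨(a (i+1)).1 + (b j).1, ?_, i+1, j, him, hj, by omega, rfl⟩
    rcases ha i him with h1 | h1 <;>
    · have e1 := congrArg Prod.fst h1
      simp only [Prod.fst_sub] at e1
      omega
  · have hjr : j + 1 < r := by omega
    refine ⟨(a i).1 + (b (j+1)).1, ?_, i, j+1, hi, hjr, by omega, rfl⟩
    rcases hb j hjr with h1 | h1 <;>
    · have e1 := congrArg Prod.fst h1
      simp only [Prod.fst_sub] at e1
      omega

private lemma down_step (m r : ℕ) (a b : ℕ → ℤ × ℤ)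
    (ha : ∀ i, i + 1 < m → a (i + 1) - a i = (1, 0) ∨ a (i + 1) - a i = (0, 1))
    (hb : ∀ j, j + 1 < r → b (j + 1) - b j = (1, 0) ∨ b (j + 1) - b j = (0, 1))
    (s : ℕ) (v : ℤ) (h : Pt m r a b (s+1) v) :
    ∃ v', v' ≤ v ∧ Pt m r a b s v' := by
  obtain ⟨i, j, hi, hj, hij, hv⟩ := h
  rcases Nat.eq_zero_or_pos i with h0 | h0
  · have hj0 : 0 < j := by omega
    have hjr : (j - 1) + 1 < r := by omega
    have hjj : (j - 1) + 1 = j := by omega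
    refine ⟨(a i).1 + (b (j-1)).1, ?_, i, j-1, hi, by omega, by omega, rfl⟩
    rcases hb (j-1) hjr with h1 | h1 <;>
    · rw [hjj] at h1
      have e1 := congrArg Prod.fst h1
      simp only [Prod.fst_sub] at e1
      omega
  · have him : (i - 1) + 1 < m := by omega
    have hii : (i - 1) + 1 = i := by omega
    refine ⟨(a (i-1)).1 + (b j).1, ?_, i-1, j, by omega, hj, by omega, rfl⟩
    rcases ha (i-1) him with h1 | h1 <;>
    · rw [hii] at h1
      have e1 := congrArg Prod.fst h1
      simp only [Prod.fst_sub] at e1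
      omega

private lemma walk_up (m r : ℕ) (a b : ℕ → ℤ × ℤ)
    (ha : ∀ i, i + 1 < m → a (i + 1) - a i = (1, 0) ∨ a (i + 1) - a i = (0, 1))
    (hb : ∀ j, j + 1 < r → b (j + 1) - b j = (1, 0) ∨ b (j + 1) - b j = (0, 1)) :
    ∀ d s v, s + d + 2 ≤ m + r → Pt m r a b s v →
      ∃ v', v ≤ v' ∧ Pt m r a b (s + d) v' := by
  intro d
  induction d with
  | zero => exact fun s v _ h => ⟨v, le_refl _, h⟩
  | succ d ih =>
    intro s v hle h
    obtain ⟨v', hv', h'⟩ := ih s v (by omega) h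
    obtain ⟨v'', hv'', h''⟩ := up_step m r a b ha hb (s + d) v' (by omega) h'
    exact ⟨v'', le_trans hv' hv'', h''⟩

private lemma walk_down (m r : ℕ) (a b : ℕ → ℤ × ℤ)
    (ha : ∀ i, i + 1 < m → a (i + 1) - a i = (1, 0) ∨ a (i + 1) - a i = (0, 1))
    (hb : ∀ j, j + 1 < r → b (j + 1) - b j = (1, 0) ∨ b (j + 1) - b j = (0, 1)) :
    ∀ d s v, Pt m r a b (s + d) v → ∃ v', v' ≤ v ∧ Pt m r a b s v' := by
  intro d
  induction d with
  | zero => exact fun s v h => ⟨v, le_refl _, h⟩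
  | succ d ih =>
    intro s v h
    obtain ⟨v', hv', h'⟩ := down_step m r a b ha hb (s + d) v h
    obtain ⟨v'', hv'', h''⟩ := ih s v' h'
    exact ⟨v'', le_trans hv'' hv', h''⟩

private lemma mid (m r : ℕ) (a b : ℕ → ℤ × ℤ)
    (ha : ∀ i, i + 1 < m → a (i + 1) - a i = (1, 0) ∨ a (i + 1) - a i = (0, 1))
    (hb : ∀ j, j + 1 < r → b (j + 1) - b j = (1, 0) ∨ b (j + 1) - b j = (0, 1))
    (s : ℕ) (v v₁ v₂ : ℤ)
    (h1 : Pt m r a b s v₁) (h2 : Pt m r a b s v₂) (hl : v₁ ≤ v) (hu : v ≤ v₂) :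
    Pt m r a b s v := by
  obtain ⟨i₁, j₁, hi₁, hj₁, hij₁, hv₁⟩ := h1
  obtain ⟨i₂, j₂, hi₂, hj₂, hij₂, hv₂⟩ := h2
  have hstep : ∀ lohi : ℕ × ℕ, lohi.1 ≤ i₁ ∨ lohi.1 ≤ i₂ → True → True := fun _ _ _ => trivial
  -- wlog via two symmetric cases
  rcases le_total i₁ i₂ with hle | hle
  · have key := ivt_aux (fun i => (a i).1 + (b (s - i)).1) i₁ (i₂ - i₁)
      (by
        intro n hn hn1
        have hnm : n + 1 < m := by omega
        have hsr : s - n < r := by omega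
        have hsn : s - (n+1) + 1 = s - n := by omega
        have hda := ha n hnm
        have hdb := hb (s - (n+1)) (by omega)
        rw [hsn] at hdb
        have ea : (a (n+1)).1 - (a n).1 = 1 ∨ (a (n+1)).1 - (a n).1 = 0 := by
          rcases hda with h | h <;> [left; right] <;>
          · have := congrArg Prod.fst h
            simp only [Prod.fst_sub] at this
            simpa using this
        have eb : (b (s-n)).1 - (b (s-(n+1))).1 = 1 ∨ (b (s-n)).1 - (b (s-(n+1))).1 = 0 := by
          rcases hdb with h | h <;> [left; right] <;>
          · have := congrArg Prod.fst h
            simp only [Prod.fst_sub] at this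
            simpa using this
        omega)
      v
      (by
        have e2 : i₁ + (i₂ - i₁) = i₂ := by omega
        rw [e2]
        have f1 : s - i₁ = j₁ := by omega
        have f2 : s - i₂ = j₂ := by omega
        simp only [f1, f2]
        left; constructor <;> omega)
    obtain ⟨n, hn1, hn2, hn3⟩ := key
    exact ⟨n, s - n, by omega, by omega, by omega, hn3⟩
  · have key := ivt_aux (fun i => (a i).1 + (b (s - i)).1) i₂ (i₁ - i₂)
      (by
        intro n hn hn1
        have hnm : n + 1 < m := by omega
        have hsr : s - n < r := by omega
        have hsn : s - (n+1) + 1 = s - n := by omega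
        have hda := ha n hnm
        have hdb := hb (s - (n+1)) (by omega)
        rw [hsn] at hdb
        have ea : (a (n+1)).1 - (a n).1 = 1 ∨ (a (n+1)).1 - (a n).1 = 0 := by
          rcases hda with h | h <;> [left; right] <;>
          · have := congrArg Prod.fst h
            simp only [Prod.fst_sub] at this
            simpa using this
        have eb : (b (s-n)).1 - (b (s-(n+1))).1 = 1 ∨ (b (s-n)).1 - (b (s-(n+1))).1 = 0 := by
          rcases hdb with h | h <;> [left; right] <;>
          · have := congrArg Prod.fst h
            simp only [Prod.fst_sub] at this
            simpa using this
        omega)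
      v
      (by
        have e2 : i₂ + (i₁ - i₂) = i₁ := by omega
        rw [e2]
        have f1 : s - i₁ = j₁ := by omega
        have f2 : s - i₂ = j₂ := by omega
        simp only [f1, f2]
        right; constructor <;> omega)
    obtain ⟨n, hn1, hn2, hn3⟩ := key
    exact ⟨n, s - n, by omega, by omega, by omega, hn3⟩

private lemma sum_coord (m : ℕ) (a : ℕ → ℤ × ℤ)
    (ha : ∀ i, i + 1 < m → a (i + 1) - a i = (1, 0) ∨ a (i + 1) - a i = (0, 1)) :
    ∀ i, i < m → (a i).1 + (a i).2 = (a 0).1 + (a 0).2 + i := by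
  intro i
  induction i with
  | zero => intro _; simp
  | succ i ih =>
    intro h
    have e2 := ih (by omega)
    have h1 := ha i h
    have ea : (a (i+1)).1 - (a i).1 + ((a (i+1)).2 - (a i).2) = 1 := by
      rcases h1 with h1 | h1 <;>
      · have f1 := congrArg Prod.fst h1
        have f2 := congrArg Prod.snd h1
        simp only [Prod.fst_sub, Prod.snd_sub] at f1 f2
        omega
    push_cast
    omega

/-- For connected monotone increasing sets `A, B ⊆ ℤ²` (each enumerated by a sequence
whose consecutive differences are `(1,0)` or `(0,1)`), every vertical fiber
`{y : (k, y) ∈ A + B}` of the sumset is an interval of integers. -/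
theorem stmt_14 (m r : ℕ) (hm : 1 ≤ m) (hr : 1 ≤ r)
    (a b : ℕ → ℤ × ℤ)
    (ha : ∀ i, i + 1 < m → a (i + 1) - a i = (1, 0) ∨ a (i + 1) - a i = (0, 1))
    (hb : ∀ j, j + 1 < r → b (j + 1) - b j = (1, 0) ∨ b (j + 1) - b j = (0, 1))
    (A B : Finset (ℤ × ℤ))
    (hA : A = (Finset.range m).image a) (hB : B = (Finset.range r).image b)
    (k y y₁ y₂ : ℤ) (h1 : y₁ ≤ y) (h2 : y ≤ y₂)
    (hy1 : (k, y₁) ∈ A + B) (hy2 : (k, y₂) ∈ A + B) :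
    (k, y) ∈ A + B := by
  subst hA hB
  rw [Finset.mem_add] at hy1 hy2 ⊢
  obtain ⟨p, hp, q, hq, hpq⟩ := hy1
  obtain ⟨p', hp', q', hq', hpq'⟩ := hy2
  simp only [Finset.mem_image, Finset.mem_range] at hp hq hp' hq'
  obtain ⟨i₁, hi₁, rfl⟩ := hp
  obtain ⟨j₁, hj₁, rfl⟩ := hq
  obtain ⟨i₂, hi₂, rfl⟩ := hp'
  obtain ⟨j₂, hj₂, rfl⟩ := hq'
  have sa := sum_coord m a ha
  have sb := sum_coord r b hb
  have ef1 : (a i₁).1 + (b j₁).1 = k := by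
    have := congrArg Prod.fst hpq; simpa using this
  have es1 : (a i₁).2 + (b j₁).2 = y₁ := by
    have := congrArg Prod.snd hpq; simpa using this
  have ef2 : (a i₂).1 + (b j₂).1 = k := by
    have := congrArg Prod.fst hpq'; simpa using this
  have es2 : (a i₂).2 + (b j₂).2 = y₂ := by
    have := congrArg Prod.snd hpq'; simpa using this
  have sa1 := sa i₁ hi₁
  have sb1 := sb j₁ hj₁
  have sa2 := sa i₂ hi₂
  have sb2 := sb j₂ hj₂
  -- k + y₁ = σ + i₁ + j₁ ;  k + y₂ = σ + i₂ + j₂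
  set n : ℕ := i₁ + j₁ + (y - y₁).toNat with hn
  have hnz : (n : ℤ) = (i₁ : ℤ) + j₁ + y - y₁ := by omega
  have hns : i₁ + j₁ ≤ n := by omega
  have hn2 : n ≤ i₂ + j₂ := by omega
  have P1 : Pt m r a b (i₁ + j₁) k := ⟨i₁, j₁, hi₁, hj₁, rfl, ef1⟩
  have P2 : Pt m r a b (i₂ + j₂) k := ⟨i₂, j₂, hi₂, hj₂, rfl, ef2⟩
  obtain ⟨vU, hvU, PU⟩ := walk_up m r a b ha hb (n - (i₁ + j₁)) (i₁ + j₁) k (by omega) P1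
  rw [show i₁ + j₁ + (n - (i₁ + j₁)) = n from by omega] at PU
  have P2' : Pt m r a b (n + (i₂ + j₂ - n)) k := by
    rw [show n + (i₂ + j₂ - n) = i₂ + j₂ from by omega]; exact P2
  obtain ⟨vL, hvL, PL⟩ := walk_down m r a b ha hb (i₂ + j₂ - n) n k P2'
  have Pn : Pt m r a b n k := mid m r a b ha hb n k vL vU PL PU hvL hvU
  obtain ⟨i, j, hi, hj, hij, hv⟩ := Pn
  refine ⟨a i, ?_, b j, ?_, ?_⟩
  · exact Finset.mem_image.2 ⟨i, Finset.mem_range.2 hi, rfl⟩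
  · exact Finset.mem_image.2 ⟨j, Finset.mem_range.2 hj, rfl⟩
  · have sai := sa i hi
    have sbj := sb j hj
    have : (a i).2 + (b j).2 = y := by omega
    exact Prod.ext hv this
end

section
/- Let d ≥ 1, n ≥ 1, and ℓ ≥ 1 be integers. If S ⊆ {0, 1, …, n−1}^d is a monotone increasing set, then the set of grid cells intersected by S, namely {(⌊x₁/ℓ⌋, …, ⌊x_d/ℓ⌋) : (x₁, …, x_d) ∈ S}, is itself a monotone increasing set contained in {0, 1, …, ⌈n/ℓ⌉−1}^d, and hence has size at most d(⌈n/ℓ⌉ − 1) + 1. -/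
/-- A finite set `S ⊆ ℕ^d` is monotone increasing if it can be enumerated as a
sequence of distinct points whose `j`-th coordinates form a nondecreasing sequence,
for every coordinate `j`. -/
def MonoInc {d : ℕ} (S : Finset (Fin d → ℕ)) : Prop :=
  ∃ f : Fin S.card → (Fin d → ℕ),
    Function.Injective f ∧ (∀ x, x ∈ S ↔ ∃ i, f i = x) ∧
    ∀ j : Fin d, Monotone fun i => f i j

lemma key_eq {d : ℕ} {x y : Fin d → ℕ} (hxy : x ≤ y)
    (h : ∑ j, x j = ∑ j, y j) : x = y := by
  funext j
  exact (Finset.sum_eq_sum_iff_of_le (fun i _ => hxy i)).mp h j (Finset.mem_univ j)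

lemma key_injOn {d : ℕ} {S : Finset (Fin d → ℕ)}
    (h : IsChain (· ≤ ·) (S : Set (Fin d → ℕ))) :
    Set.InjOn (fun x : Fin d → ℕ => ∑ j, x j) S := by
  intro x hx y hy hk
  by_contra hne
  rcases h hx hy hne with hle | hle
  · exact hne (key_eq hle hk)
  · exact hne (key_eq hle hk.symm).symm

lemma monoInc_of_isChain {d : ℕ} {S : Finset (Fin d → ℕ)}
    (h : IsChain (· ≤ ·) (S : Set (Fin d → ℕ))) : MonoInc S := by
  classical
  set k : (Fin d → ℕ) → ℕ := fun x => ∑ j, x j with hk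
  have hinjOn : Set.InjOn k S := key_injOn h
  set K : Finset ℕ := S.image k with hKdef
  have hKcard : K.card = S.card := Finset.card_image_of_injOn hinjOn
  let g := K.orderIsoOfFin hKcard
  have hex : ∀ i : Fin S.card, ∃! x, x ∈ S ∧ k x = (g i : ℕ) := by
    intro i
    have : (g i : ℕ) ∈ K := (g i).2
    obtain ⟨x, hx, hkx⟩ := Finset.mem_image.mp this
    exact ⟨x, ⟨hx, hkx⟩, fun y ⟨hy, hky⟩ => hinjOn hy hx (hky.trans hkx.symm)⟩
  let f : Fin S.card → (Fin d → ℕ) := fun i => Finset.choose _ S (hex i)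
  have hfS : ∀ i, f i ∈ S := fun i => Finset.choose_mem _ S (hex i)
  have hfk : ∀ i, k (f i) = (g i : ℕ) := fun i => Finset.choose_property _ S (hex i)
  have hmono : ∀ i i' : Fin S.card, i ≤ i' → f i ≤ f i' := by
    intro i i' hii
    have hkle : k (f i) ≤ k (f i') := by
      rw [hfk, hfk]; exact_mod_cast g.monotone hii
    by_cases heq : f i = f i'
    · exact heq.le
    · rcases h (hfS i) (hfS i') heq with hle | hle
      · exact hle
      · have : k (f i') ≤ k (f i) := Finset.sum_le_sum fun j _ => hle j
        exact (key_eq hle (le_antisymm this hkle)).symm.le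
  refine ⟨f, ?_, ?_, fun j => fun i i' hii => hmono i i' hii j⟩
  · intro i i' hfe
    have : (g i : ℕ) = (g i') := by rw [← hfk, ← hfk, hfe]
    exact g.injective (Subtype.ext this)
  · intro x
    constructor
    · intro hx
      have hxK : k x ∈ K := Finset.mem_image_of_mem k hx
      obtain ⟨i, hi⟩ := g.surjective ⟨k x, hxK⟩
      exact ⟨i, hinjOn (hfS i) hx (by rw [hfk, hi])⟩
    · rintro ⟨i, rfl⟩; exact hfS i

lemma isChain_of_monoInc {d : ℕ} {S : Finset (Fin d → ℕ)} (h : MonoInc S) :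
    IsChain (· ≤ ·) (S : Set (Fin d → ℕ)) := by
  obtain ⟨f, hinj, hmem, hmono⟩ := h
  intro x hx y hy _
  obtain ⟨i, rfl⟩ := (hmem x).mp hx
  obtain ⟨i', rfl⟩ := (hmem y).mp hy
  rcases le_total i i' with hle | hle
  · exact Or.inl fun j => hmono j hle
  · exact Or.inr fun j => hmono j hle

/-- Clusterability of monotone sets: for a monotone increasing `S ⊆ {0,…,n−1}^d`,
the set of grid cells `{(⌊x₁/ℓ⌋, …, ⌊x_d/ℓ⌋) : x ∈ S}` of side length `ℓ`
is itself a monotone increasing subset of `{0, …, ⌈n/ℓ⌉−1}^d`, and hence has size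
at most `d(⌈n/ℓ⌉−1) + 1`.  (Here `⌈n/ℓ⌉ = (n + ℓ − 1)/ℓ` in natural division.) -/
theorem stmt_16 (d n ℓ : ℕ) (hd : 1 ≤ d) (hn : 1 ≤ n) (hℓ : 1 ≤ ℓ)
    (S : Finset (Fin d → ℕ)) (hSn : ∀ x ∈ S, ∀ j, x j < n)
    (hmono : MonoInc S) :
    MonoInc (S.image fun x j => x j / ℓ) ∧
    (∀ y ∈ S.image fun x j => x j / ℓ, ∀ j, y j < (n + ℓ - 1) / ℓ) ∧
    (S.image fun x j => x j / ℓ).card ≤ d * ((n + ℓ - 1) / ℓ - 1) + 1 := by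
  classical
  set T : Finset (Fin d → ℕ) := S.image fun x j => x j / ℓ with hT
  have hchainS : IsChain (· ≤ ·) (S : Set (Fin d → ℕ)) := isChain_of_monoInc hmono
  have hchainT : IsChain (· ≤ ·) (T : Set (Fin d → ℕ)) := by
    intro y hy y' hy' hne
    obtain ⟨x, hx, rfl⟩ := Finset.mem_image.mp hy
    obtain ⟨x', hx', rfl⟩ := Finset.mem_image.mp hy'
    have hxx : x ≠ x' := by rintro rfl; exact hne rfl
    rcases hchainS hx hx' hxx with hle | hle
    · exact Or.inl fun j => Nat.div_le_div_right (hle j)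
    · exact Or.inr fun j => Nat.div_le_div_right (hle j)
  set m := (n + ℓ - 1) / ℓ with hm
  have hbound : ∀ y ∈ T, ∀ j, y j < m := by
    intro y hy j
    obtain ⟨x, hx, rfl⟩ := Finset.mem_image.mp hy
    have h1 : x j / ℓ ≤ (n - 1) / ℓ := Nat.div_le_div_right (by have := hSn x hx j; omega)
    have h2 : (n + ℓ - 1) = (n - 1) + ℓ := by omega
    simp only [hm, h2, Nat.add_div_right _ hℓ]
    omega
  refine ⟨monoInc_of_isChain hchainT, hbound, ?_⟩
  have hkinj : Set.InjOn (fun x : Fin d → ℕ => ∑ j, x j) T := key_injOn hchainT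
  have hsub : T.image (fun x : Fin d → ℕ => ∑ j, x j) ⊆ Finset.range (d * (m - 1) + 1) := by
    intro s hs
    obtain ⟨y, hy, rfl⟩ := Finset.mem_image.mp hs
    have : ∑ j, y j ≤ ∑ _j : Fin d, (m - 1) :=
      Finset.sum_le_sum fun j _ => by have := hbound y hy j; omega
    simp only [Finset.sum_const, Finset.card_univ, Fintype.card_fin, smul_eq_mul] at this
    rw [Finset.mem_range]; omega
  calc T.card = (T.image (fun x : Fin d → ℕ => ∑ j, x j)).card :=
        (Finset.card_image_of_injOn hkinj).symm
    _ ≤ (Finset.range (d * (m - 1) + 1)).card := Finset.card_le_card hsub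
    _ = d * (m - 1) + 1 := Finset.card_range _
end
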